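/- arXiv:1606.04021 — 6 statements merged into one kernel-verified Lean document; each statement's English description precedes it below -/
import Mathlib

section
/- Let G be a finite chordal simple graph with vertex set V and let O be a finite nonempty set. Suppose that for every maximal clique C of G a probability distribution p_C on the set of functions C → O is given, and that for any two maximal cliques C and D of G the marginal of p_C on C ∩ D equals the marginal of p_D on C ∩ D. Then there exists a probability distribution P on the set of functions V → O whose marginal on every maximal clique C equals p_C. -/
/-- A finite simple graph is *chordal* if every cycle of length at least 4 has a
chord, i.e. an edge of the graph joining two vertices of the cycle that are not
consecutive on the cycle. -/
def SimpleGraph.IsChordal {W : Type*} (G : SimpleGraph W) : Prop :=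
  ∀ (v : W) (c : G.Walk v v), c.IsCycle → 4 ≤ c.length →
    ∃ u w : W, u ∈ c.support ∧ w ∈ c.support ∧ G.Adj u w ∧ ¬ c.toSubgraph.Adj u w

/-- A maximal clique of a graph: a clique contained in no strictly larger clique. -/
def SimpleGraph.IsMaxClique {W : Type*} (G : SimpleGraph W) (C : Finset W) : Prop :=
  G.IsClique (C : Set W) ∧ ∀ D : Finset W, G.IsClique (D : Set W) → C ⊆ D → D = C

section Pushf
variable {α β γ : Type*} [Fintype α] [DecidableEq β] [DecidableEq γ]

noncomputable def pushf (r : α → β) (q : α → ℝ) : β → ℝ :=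
  fun b => ∑ a, if r a = b then q a else 0

lemma pushf_nonneg {r : α → β} {q : α → ℝ} (h : ∀ a, 0 ≤ q a) (b : β) :
    0 ≤ pushf r q b := by
  refine Finset.sum_nonneg fun a _ => ?_
  split <;> simp [h a]

lemma sum_pushf [Fintype β] (r : α → β) (q : α → ℝ) :
    ∑ b, pushf r q b = ∑ a, q a := by
  simp only [pushf]
  rw [Finset.sum_comm]
  refine Finset.sum_congr rfl fun a _ => ?_
  simp

lemma pushf_comp [Fintype β] (r : α → β) (r' : β → γ) (q : α → ℝ) :
    pushf r' (pushf r q) = pushf (r' ∘ r) q := by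
  funext c
  simp only [pushf]
  calc (∑ b, if r' b = c then ∑ a, if r a = b then q a else 0 else 0)
      = ∑ b, ∑ a, if r' b = c then (if r a = b then q a else 0) else 0 := by
        refine Finset.sum_congr rfl fun b _ => ?_; split <;> simp
    _ = ∑ a, ∑ b, if r' b = c then (if r a = b then q a else 0) else 0 :=
        Finset.sum_comm
    _ = ∑ a, if (r' ∘ r) a = c then q a else 0 := by
        refine Finset.sum_congr rfl fun a _ => ?_
        rw [Finset.sum_eq_single (r a)]
        · simp [Function.comp]
        · intro b _ hb; simp [Ne.symm hb]
        · simp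

lemma le_pushf {r : α → β} {q : α → ℝ} (h : ∀ a, 0 ≤ q a) (a : α) :
    q a ≤ pushf r q (r a) := by
  simp only [pushf]
  have : q a = ∑ a' ∈ {a}, if r a' = r a then q a' else 0 := by simp
  rw [this]
  exact Finset.sum_le_sum_of_subset_of_nonneg (by simp) (fun a' _ _ => by split <;> simp [h a'])

lemma eq_zero_of_pushf_eq_zero {r : α → β} {q : α → ℝ} (h : ∀ a, 0 ≤ q a) {a : α}
    (h0 : pushf r q (r a) = 0) : q a = 0 :=
  le_antisymm (h0 ▸ le_pushf h a) (h a)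

/-- Transport of a pushforward along compatible bijections. -/
lemma pushf_transport {O : Type*} [Fintype O] [DecidableEq O]
    {X A X' A' : Type*} [Fintype A] [Fintype A'] [Fintype X] [Fintype X']
    [DecidableEq A] [DecidableEq A'] [DecidableEq X] [DecidableEq X']
    (j : X → A) (j' : X' → A') (eX : X ≃ X') (eA : A ≃ A')
    (hcomm : ∀ x, j' (eX x) = eA (j x)) (q : (A → O) → ℝ) (g' : X' → O) :
    pushf (fun f' : A' → O => f' ∘ j') (fun f' => q (f' ∘ eA)) g'
      = pushf (fun f : A → O => f ∘ j) q (g' ∘ eX) := by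
  simp only [pushf]
  refine (Fintype.sum_equiv (Equiv.arrowCongr eA (Equiv.refl O)) _ _ fun f => ?_).symm
  have h1 : ((Equiv.arrowCongr eA (Equiv.refl O)) f) ∘ eA = f := by
    funext a; simp [Equiv.arrowCongr]
  rw [h1]
  congr 1
  simp only [eq_iff_iff]
  constructor
  · intro h; funext x'
    have := congrFun h (eX.symm x')
    simp only [Function.comp_apply] at this ⊢
    rw [show j' x' = j' (eX (eX.symm x')) by simp, hcomm]
    simpa [Equiv.arrowCongr] using this
  · intro h; funext x
    have := congrFun h (eX x)
    simp only [Function.comp_apply, hcomm x] at this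
    simpa [Equiv.arrowCongr] using this

lemma sum_ite_forall_eq {O : Type*} [Fintype O] [DecidableEq O] {X A : Type*}
    [Fintype A] [Fintype X] [DecidableEq A] (j : X → A) (q : (A → O) → ℝ) (g : X → O) :
    (∑ f : A → O, if (∀ x : X, f (j x) = g x) then q f else 0)
      = pushf (fun f : A → O => f ∘ j) q g := by
  simp only [pushf]
  refine Finset.sum_congr rfl fun f _ => ?_
  refine if_congr ?_ rfl rfl
  constructor
  · intro h; funext x; exact h x
  · intro h x; exact congrFun h x

end Pushf

namespace ChordalAux

open SimpleGraph Finset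

universe u
variable {V : Type*} {G : SimpleGraph V}

/-- A vertex whose neighbourhood is a clique. -/
def Simplicial (G : SimpleGraph V) (v : V) : Prop :=
  ∀ x y, G.Adj v x → G.Adj v y → x ≠ y → G.Adj x y

/-- `b` is reachable from `a` by a walk avoiding `S`. -/
def Reach (G : SimpleGraph V) (S : Finset V) (a b : V) : Prop :=
  ∃ w : G.Walk a b, ∀ z ∈ w.support, z ∉ S

lemma Reach.refl {S : Finset V} {a : V} (ha : a ∉ S) : Reach G S a a :=
  ⟨SimpleGraph.Walk.nil, by simp [ha]⟩

lemma Reach.symm {S : Finset V} {a b : V} (h : Reach G S a b) : Reach G S b a := by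
  obtain ⟨w, hw⟩ := h
  exact ⟨w.reverse, by simpa [SimpleGraph.Walk.support_reverse] using hw⟩

lemma Reach.trans {S : Finset V} {a b c : V} (h : Reach G S a b) (h' : Reach G S b c) :
    Reach G S a c := by
  obtain ⟨w, hw⟩ := h; obtain ⟨w', hw'⟩ := h'
  refine ⟨w.append w', fun z hz => ?_⟩
  rw [SimpleGraph.Walk.mem_support_append_iff] at hz
  exact hz.elim (hw z) (hw' z)

lemma Reach.adj {S : Finset V} {a x y : V} (h : Reach G S a x) (hxy : G.Adj x y)
    (hy : y ∉ S) : Reach G S a y := by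
  obtain ⟨w, hw⟩ := h
  refine ⟨w.concat hxy, fun z hz => ?_⟩
  rw [SimpleGraph.Walk.support_concat, List.mem_append] at hz
  rcases hz with hz | hz
  · exact hw z hz
  · rw [List.mem_singleton] at hz; subst hz; exact hy

lemma Reach.mem_support [DecidableEq V] {S : Finset V} {a x z : V} (h : Reach G S a x) : ∀ w : G.Walk a x,
    (∀ y ∈ w.support, y ∉ S) → z ∈ w.support → Reach G S a z := by
  intro w hw hz
  exact ⟨w.takeUntil z hz, fun y hy => hw y (w.support_takeUntil_subset hz hy)⟩

lemma not_reach_full {a b : V} [Fintype V] [DecidableEq V] (hne : a ≠ b) (hnadj : ¬ G.Adj a b) :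
    ¬ Reach G (Finset.univ \ {a, b}) a b := by
  rintro ⟨w, hw⟩
  obtain ⟨d, hd, hfst, hsnd⟩ := w.exists_boundary_dart ({a} : Set V) rfl (by simp [hne.symm])
  have hsup : d.snd ∈ w.support := w.dart_snd_mem_support_of_mem_darts hd
  have := hw _ hsup
  simp only [Finset.mem_sdiff, Finset.mem_univ, true_and, Finset.mem_insert,
    Finset.mem_singleton, not_not] at this
  rcases this with rfl | rfl
  · exact hsnd rfl
  · exact hnadj (hfst ▸ d.adj)

/-- Dichotomy: for `u, w` in the support of `p`, either `w` comes after (the first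
occurrence of) `u` or vice versa. -/
lemma mem_dropUntil_or [DecidableEq V] {x y : V} (p : G.Walk x y) :
    ∀ {u w : V} (hu : u ∈ p.support) (hw : w ∈ p.support),
      w ∈ (p.dropUntil u hu).support ∨ u ∈ (p.dropUntil w hw).support := by
  induction p with
  | nil =>
    intro u w hu hw
    rw [SimpleGraph.Walk.mem_support_nil_iff] at hu hw
    subst hu; subst hw
    left
    simp [SimpleGraph.Walk.dropUntil]
  | @cons a b c r p ih =>
    intro u w hu hw
    by_cases hua : a = u
    · left
      subst hua
      simp only [SimpleGraph.Walk.dropUntil, dif_pos rfl]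
      exact hw
    · by_cases hwa : a = w
      · right
        subst hwa
        simp only [SimpleGraph.Walk.dropUntil, dif_pos rfl]
        exact hu
      · have hu' : u ∈ p.support := by
          rw [SimpleGraph.Walk.support_cons, List.mem_cons] at hu
          rcases hu with rfl | hu
          · exact absurd rfl hua
          · exact hu
        have hw' : w ∈ p.support := by
          rw [SimpleGraph.Walk.support_cons, List.mem_cons] at hw
          rcases hw with rfl | hw
          · exact absurd rfl hwa
          · exact hw
        have e1 : (SimpleGraph.Walk.cons r p).dropUntil u hu = p.dropUntil u hu' := by
          simp only [SimpleGraph.Walk.dropUntil, dif_neg hua]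
        have e2 : (SimpleGraph.Walk.cons r p).dropUntil w hw = p.dropUntil w hw' := by
          simp only [SimpleGraph.Walk.dropUntil, dif_neg hwa]
        rw [e1, e2]
        exact ih hu' hw'

/-- A walk of length one from `u` to `w` has `s(u,w)` among its edges. -/
lemma edge_mem_of_length_one {u w : V} (t : G.Walk u w) (h : t.length = 1) :
    s(u, w) ∈ t.edges := by
  cases t with
  | nil => simp at h
  | cons r q =>
    have : q.length = 0 := by simpa using h
    have := SimpleGraph.Walk.eq_of_length_eq_zero this
    subst this
    simp

/-- Shortcut: a chord of a walk which is not one of its edges yields a strictly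
shorter walk with support inside the old support. -/
lemma shortcut [DecidableEq V] {x y u w : V} (p : G.Walk x y) (hu : u ∈ p.support)
    (hadj : G.Adj u w) (hw : w ∈ (p.dropUntil u hu).support)
    (hne : s(u, w) ∉ p.edges) :
    ∃ q : G.Walk x y, (∀ z ∈ q.support, z ∈ p.support) ∧ q.length < p.length := by
  set t1 := p.takeUntil u hu with ht1
  set t2 := p.dropUntil u hu with ht2
  have hsplit : t1.append t2 = p := p.take_spec hu
  have hlen : t1.length + t2.length = p.length := by
    rw [← hsplit, SimpleGraph.Walk.length_append]
  set t3 := t2.takeUntil w hw with ht3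
  set t4 := t2.dropUntil w hw with ht4
  have hsplit2 : t3.append t4 = t2 := t2.take_spec hw
  have hlen2 : t3.length + t4.length = t2.length := by
    rw [← hsplit2, SimpleGraph.Walk.length_append]
  have h3 : 2 ≤ t3.length := by
    rcases Nat.lt_or_ge t3.length 2 with h | h
    · interval_cases h' : t3.length
      · exact absurd (SimpleGraph.Walk.eq_of_length_eq_zero h') hadj.ne
      · exfalso
        refine hne (List.Subset.trans (t2.edges_takeUntil_subset hw)
          (p.edges_dropUntil_subset hu) ?_)
        exact edge_mem_of_length_one t3 h'
    · exact h
  refine ⟨t1.append (SimpleGraph.Walk.cons hadj t4), ?_, ?_⟩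
  · intro z hz
    rw [SimpleGraph.Walk.mem_support_append_iff] at hz
    rcases hz with hz | hz
    · exact p.support_takeUntil_subset hu hz
    · rw [SimpleGraph.Walk.support_cons, List.mem_cons] at hz
      rcases hz with rfl | hz
      · exact hu
      · exact p.support_dropUntil_subset hu (t2.support_dropUntil_subset hw hz)
  · rw [SimpleGraph.Walk.length_append, SimpleGraph.Walk.length_cons]
    omega

/-- Minimal-length constrained walks. -/
lemma exists_min_path [DecidableEq V] (x y : V) (hne : x ≠ y) (hnadj : ¬ G.Adj x y)
    (P : V → Prop) (hex : ∃ w : G.Walk x y, ∀ z ∈ w.support, z = x ∨ z = y ∨ P z) :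
    ∃ p : G.Walk x y, p.IsPath ∧ 2 ≤ p.length ∧
      (∀ z ∈ p.support, z = x ∨ z = y ∨ P z) ∧
      (∀ q : G.Walk x y, (∀ z ∈ q.support, z = x ∨ z = y ∨ P z) → p.length ≤ q.length) := by
  classical
  have hexn : ∃ n : ℕ, ∃ w : G.Walk x y, w.length = n ∧
      ∀ z ∈ w.support, z = x ∨ z = y ∨ P z := by
    obtain ⟨w, hw⟩ := hex
    exact ⟨w.length, w, rfl, hw⟩
  obtain ⟨w₀, hw₀len, hw₀⟩ := Nat.find_spec hexn
  set p := w₀.bypass with hp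
  have hpath : p.IsPath := w₀.bypass_isPath
  have hsup : ∀ z ∈ p.support, z = x ∨ z = y ∨ P z :=
    fun z hz => hw₀ z (w₀.support_bypass_subset hz)
  have hmin : ∀ q : G.Walk x y, (∀ z ∈ q.support, z = x ∨ z = y ∨ P z) →
      p.length ≤ q.length := by
    intro q hq
    have h1 : p.length ≤ Nat.find hexn := hw₀len ▸ w₀.length_bypass_le
    have h2 : Nat.find hexn ≤ q.length := Nat.find_min' hexn ⟨q, rfl, hq⟩
    omega
  have h2 : 2 ≤ p.length := by
    rcases Nat.lt_or_ge p.length 2 with h | h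
    · interval_cases h' : p.length
      · exact absurd (SimpleGraph.Walk.eq_of_length_eq_zero h') hne
      · exact absurd (SimpleGraph.Walk.adj_of_length_eq_one h') hnadj
    · exact h
  exact ⟨p, hpath, h2, hsup, hmin⟩

/-- The two constrained paths glue to a chordless-side cycle; chordality forces the
separator to be a clique. -/
lemma sep_clique_aux [DecidableEq V] (hG : G.IsChordal) {x y : V} {A B : V → Prop}
    (hne : x ≠ y) (hnadj : ¬ G.Adj x y)
    (hxA : ¬ A x) (hyA : ¬ A y) (hxB : ¬ B x) (hyB : ¬ B y)
    (hAB : ∀ z, A z → B z → False)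
    (hcross : ∀ z z', A z → B z' → G.Adj z z' → False)
    (hexA : ∃ w : G.Walk x y, ∀ z ∈ w.support, z = x ∨ z = y ∨ A z)
    (hexB : ∃ w : G.Walk x y, ∀ z ∈ w.support, z = x ∨ z = y ∨ B z) :
    False := by
  obtain ⟨pA, hApath, hAlen, hAsup, hAmin⟩ := exists_min_path x y hne hnadj A hexA
  obtain ⟨pB, hBpath, hBlen, hBsup, hBmin⟩ := exists_min_path x y hne hnadj B hexB
  set c : G.Walk x x := pA.append pB.reverse with hc
  have hcsup : ∀ z ∈ c.support, z ∈ pA.support ∨ z ∈ pB.support := by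
    intro z hz
    rw [hc, SimpleGraph.Walk.mem_support_append_iff] at hz
    rcases hz with hz | hz
    · exact Or.inl hz
    · right
      rw [SimpleGraph.Walk.support_reverse] at hz
      exact List.mem_reverse.mp hz
  -- x and y are in both supports
  have hxA' : x ∈ pA.support := pA.start_mem_support
  have hyA' : y ∈ pA.support := pA.end_mem_support
  have hxB' : x ∈ pB.support := pB.start_mem_support
  have hyB' : y ∈ pB.support := pB.end_mem_support
  -- tail characterisations
  have htailA : ∀ z ∈ pA.support.tail, z ≠ x := by
    intro z hz
    have := hApath.support_nodup
    rw [pA.support_eq_cons] at this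
    rintro rfl
    exact (List.nodup_cons.mp this).1 hz
  have htailB : ∀ z ∈ pB.reverse.support.tail, z ≠ y := by
    intro z hz
    have := hBpath.reverse.support_nodup
    rw [pB.reverse.support_eq_cons] at this
    rintro rfl
    exact (List.nodup_cons.mp this).1 hz
  have hcycle : c.IsCycle := by
    rw [SimpleGraph.Walk.isCycle_def]
    refine ⟨⟨?_⟩, ?_, ?_⟩
    · -- edges nodup
      rw [hc, SimpleGraph.Walk.edges_append]
      rw [List.nodup_append]
      refine ⟨hApath.isTrail.edges_nodup, hBpath.reverse.isTrail.edges_nodup, ?_⟩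
      intro e heA e' heB he
      rw [← he] at heB
      induction e with
      | h u v =>
        have huA := pA.fst_mem_support_of_mem_edges heA
        have hvA := pA.snd_mem_support_of_mem_edges heA
        have huB := pB.reverse.fst_mem_support_of_mem_edges heB
        have hvB := pB.reverse.snd_mem_support_of_mem_edges heB
        rw [SimpleGraph.Walk.support_reverse, List.mem_reverse] at huB hvB
        have huv : G.Adj u v := pA.adj_of_mem_edges heA
        have hu2 : u = x ∨ u = y := by
          rcases hAsup u huA with h | h | h
          · exact Or.inl h
          · exact Or.inr h
          · rcases hBsup u huB with h' | h' | h'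
            · exact Or.inl h'
            · exact Or.inr h'
            · exact absurd h' (fun h'' => hAB u h h'')
        have hv2 : v = x ∨ v = y := by
          rcases hAsup v hvA with h | h | h
          · exact Or.inl h
          · exact Or.inr h
          · rcases hBsup v hvB with h' | h' | h'
            · exact Or.inl h'
            · exact Or.inr h'
            · exact absurd h' (fun h'' => hAB v h h'')
        rcases hu2 with rfl | rfl <;> rcases hv2 with rfl | rfl
        · exact huv.ne rfl
        · exact hnadj huv
        · exact hnadj huv.symm
        · exact huv.ne rfl
    · -- not nil
      intro hnil
      have : c.length = 0 := by rw [hnil]; rfl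
      rw [hc, SimpleGraph.Walk.length_append, SimpleGraph.Walk.length_reverse] at this
      omega
    · -- support tail nodup
      rw [hc, SimpleGraph.Walk.tail_support_append, List.nodup_append]
      refine ⟨hApath.support_nodup.tail, hBpath.reverse.support_nodup.tail, ?_⟩
      intro z hzA z' hzB hzz
      rw [← hzz] at hzB
      have hzA' : z ∈ pA.support := List.mem_of_mem_tail hzA
      have hzB' : z ∈ pB.support := by
        have := List.mem_of_mem_tail hzB
        rw [SimpleGraph.Walk.support_reverse, List.mem_reverse] at this
        exact this
      have h1 : z = y ∨ A z := by
        rcases hAsup z hzA' with h | h | h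
        · exact absurd h (htailA z hzA)
        · exact Or.inl h
        · exact Or.inr h
      have h2 : z = x ∨ B z := by
        rcases hBsup z hzB' with h | h | h
        · exact Or.inl h
        · exact absurd h (htailB z hzB)
        · exact Or.inr h
      rcases h1 with rfl | h1 <;> rcases h2 with h2 | h2
      · exact hne h2.symm
      · exact hyB h2
      · subst h2; exact hxA h1
      · exact hAB z h1 h2
  have hclen : 4 ≤ c.length := by
    rw [hc, SimpleGraph.Walk.length_append, SimpleGraph.Walk.length_reverse]
    omega
  obtain ⟨u, w, hus, hws, hadj, hnsub⟩ := hG x c hcycle hclen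
  -- membership in the sides
  have memedge : ∀ {u' w' : V}, s(u', w') ∈ pA.edges → c.toSubgraph.Adj u' w' := by
    intro u' w' he
    rw [← SimpleGraph.Subgraph.mem_edgeSet, SimpleGraph.Walk.mem_edges_toSubgraph]
    rw [hc, SimpleGraph.Walk.edges_append]
    exact List.mem_append_left _ he
  have memedgeB : ∀ {u' w' : V}, s(u', w') ∈ pB.edges → c.toSubgraph.Adj u' w' := by
    intro u' w' he
    rw [← SimpleGraph.Subgraph.mem_edgeSet, SimpleGraph.Walk.mem_edges_toSubgraph]
    rw [hc, SimpleGraph.Walk.edges_append]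
    refine List.mem_append_right _ ?_
    rw [SimpleGraph.Walk.edges_reverse, List.mem_reverse]
    exact he
  -- a chord inside one of the two paths contradicts minimality
  have shortA : ∀ {u' w' : V}, u' ∈ pA.support → w' ∈ pA.support → G.Adj u' w' →
      s(u', w') ∉ pA.edges → False := by
    intro u' w' hu' hw' hadj' hne'
    have hne'' : s(w', u') ∉ pA.edges := by rwa [Sym2.eq_swap]
    rcases mem_dropUntil_or pA hu' hw' with h | h
    · obtain ⟨q, hq1, hq2⟩ := shortcut pA hu' hadj' h hne'
      have := hAmin q (fun z hz => hAsup z (hq1 z hz))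
      omega
    · obtain ⟨q, hq1, hq2⟩ := shortcut pA hw' hadj'.symm h hne''
      have := hAmin q (fun z hz => hAsup z (hq1 z hz))
      omega
  have shortB : ∀ {u' w' : V}, u' ∈ pB.support → w' ∈ pB.support → G.Adj u' w' →
      s(u', w') ∉ pB.edges → False := by
    intro u' w' hu' hw' hadj' hne'
    have hne'' : s(w', u') ∉ pB.edges := by rwa [Sym2.eq_swap]
    rcases mem_dropUntil_or pB hu' hw' with h | h
    · obtain ⟨q, hq1, hq2⟩ := shortcut pB hu' hadj' h hne'
      have := hBmin q (fun z hz => hBsup z (hq1 z hz))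
      omega
    · obtain ⟨q, hq1, hq2⟩ := shortcut pB hw' hadj'.symm h hne''
      have := hBmin q (fun z hz => hBsup z (hq1 z hz))
      omega
  by_cases hA2 : u ∈ pA.support ∧ w ∈ pA.support
  · exact shortA hA2.1 hA2.2 hadj (fun he => hnsub (memedge he))
  by_cases hB2 : u ∈ pB.support ∧ w ∈ pB.support
  · exact shortB hB2.1 hB2.2 hadj (fun he => hnsub (memedgeB he))
  -- cross chord: impossible
  have cross : ∀ {u' w' : V}, u' ∈ pA.support → u' ∉ pB.support → w' ∈ pB.support →
      w' ∉ pA.support → G.Adj u' w' → False := by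
    intro u' w' h1 h2 h3 h4 hadj'
    have hu'A : A u' := by
      rcases hAsup u' h1 with rfl | rfl | h
      · exact absurd hxB' h2
      · exact absurd hyB' h2
      · exact h
    have hw'B : B w' := by
      rcases hBsup w' h3 with rfl | rfl | h
      · exact absurd hxA' h4
      · exact absurd hyA' h4
      · exact h
    exact hcross u' w' hu'A hw'B hadj'
  rcases hcsup u hus with huA | huB
  · have hwB : w ∈ pB.support := by
      rcases hcsup w hws with h | h
      · exact absurd ⟨huA, h⟩ hA2
      · exact h
    have huB : u ∉ pB.support := fun h => hB2 ⟨h, hwB⟩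
    have hwA : w ∉ pA.support := fun h => hA2 ⟨huA, h⟩
    exact cross huA huB hwB hwA hadj
  · have hwA : w ∈ pA.support := by
      rcases hcsup w hws with h | h
      · exact h
      · exact absurd ⟨huB, h⟩ hB2
    have huA : u ∉ pA.support := fun h => hA2 ⟨h, hwA⟩
    have hwB : w ∉ pB.support := fun h => hB2 ⟨huB, h⟩
    exact cross hwA hwB huB huA hadj.symm

/-- Induced subgraphs of chordal graphs are chordal. -/
lemma IsChordal.comap {V W : Type*} (f : V ↪ W) {G : SimpleGraph W} (hG : G.IsChordal) :
    (G.comap f).IsChordal := by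
  intro v c hc hl
  set emb : G.comap f ↪g G := SimpleGraph.Embedding.comap f G with hemb
  set c' : G.Walk (f v) (f v) := c.map emb.toHom with hc'
  have hcyc' : c'.IsCycle := hc.map (by
    intro a b hab
    exact f.injective hab)
  have hlen' : 4 ≤ c'.length := by rwa [show c'.length = c.length from SimpleGraph.Walk.length_map emb.toHom c]
  obtain ⟨u, w, hu, hw, hadj, hnsub⟩ := hG (f v) c' hcyc' hlen'
  rw [show c'.support = c.support.map emb.toHom from SimpleGraph.Walk.support_map emb.toHom c, List.mem_map] at hu hw
  obtain ⟨u₀, hu₀, rfl⟩ := hu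
  obtain ⟨w₀, hw₀, rfl⟩ := hw
  refine ⟨u₀, w₀, hu₀, hw₀, hadj, fun h => hnsub ?_⟩
  rw [← SimpleGraph.Subgraph.mem_edgeSet, SimpleGraph.Walk.mem_edges_toSubgraph] at h ⊢
  rw [show c'.edges = c.edges.map (Sym2.map emb.toHom) from SimpleGraph.Walk.edges_map emb.toHom c, List.mem_map]
  exact ⟨s(u₀, w₀), h, by simp⟩

/-- Each vertex of a minimal separator has a neighbour on the `a`-side. -/
lemma boundary [Fintype V] [DecidableEq V] {S : Finset V} {a b s : V}
    (haS : a ∉ S) (hsep : ¬ Reach G S a b) (hs : s ∈ S)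
    (hreach : Reach G (S.erase s) a b) :
    ∃ x, (x ∉ S ∧ Reach G S a x) ∧ G.Adj x s := by
  obtain ⟨w, hw⟩ := hreach
  have hbA : ¬ (b ∉ S ∧ Reach G S a b) := fun h => hsep h.2
  obtain ⟨d, hd, hfst, hsnd⟩ := w.exists_boundary_dart {x | x ∉ S ∧ Reach G S a x}
    ⟨haS, Reach.refl haS⟩ hbA
  have hsnds : d.snd ∈ w.support := w.dart_snd_mem_support_of_mem_darts hd
  have hsnde : d.snd ∉ S.erase s := hw _ hsnds
  by_cases hsndS : d.snd ∈ S
  · have : d.snd = s := by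
      by_contra hne
      exact hsnde (Finset.mem_erase.mpr ⟨hne, hsndS⟩)
    exact ⟨d.fst, hfst, this ▸ d.adj⟩
  · exact absurd ⟨hsndS, (hfst.2).adj d.adj hsndS⟩ hsnd

/-- Dirac's theorem: a finite chordal graph is complete or has two nonadjacent
simplicial vertices. -/
theorem dirac : ∀ (n : ℕ) (V : Type u) [Fintype V] [DecidableEq V] (G : SimpleGraph V),
    Fintype.card V ≤ n → G.IsChordal →
    (∀ x y : V, x ≠ y → G.Adj x y) ∨
    ∃ x y : V, x ≠ y ∧ ¬ G.Adj x y ∧ Simplicial G x ∧ Simplicial G y := by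
  intro n
  induction n with
  | zero =>
    intro V _ _ G hcard _
    left
    intro x
    have : IsEmpty V := Fintype.card_eq_zero_iff.mp (Nat.le_zero.mp hcard)
    exact this.elim x
  | succ n ih =>
    intro V _ _ G hcard hG
    classical
    by_cases hcomp : ∀ x y : V, x ≠ y → G.Adj x y
    · exact Or.inl hcomp
    right
    push_neg at hcomp
    obtain ⟨a, b, hab, hnadj⟩ := hcomp
    -- a minimal separator
    set F : Finset (Finset V) :=
      Finset.univ.filter (fun S => S ⊆ Finset.univ \ {a, b} ∧ ¬ Reach G S a b) with hF
    have hFne : F.Nonempty := by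
      refine ⟨Finset.univ \ {a, b}, ?_⟩
      rw [hF, Finset.mem_filter]
      exact ⟨Finset.mem_univ _, le_refl _, not_reach_full hab hnadj⟩
    obtain ⟨S, hSF, hSmin⟩ := F.exists_min_image Finset.card hFne
    rw [hF, Finset.mem_filter] at hSF
    obtain ⟨-, hSsub, hsep⟩ := hSF
    have haS : a ∉ S := fun h => by simpa using (hSsub h)
    have hbS : b ∉ S := fun h => by simpa using (hSsub h)
    have hsepb : ¬ Reach G S b a := fun h => hsep h.symm
    have hmin : ∀ s ∈ S, Reach G (S.erase s) a b := by
      intro s hs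
      by_contra hnr
      have hmem : S.erase s ∈ F := by
        rw [hF, Finset.mem_filter]
        exact ⟨Finset.mem_univ _, le_trans (Finset.erase_subset s S) hSsub, hnr⟩
      have := hSmin _ hmem
      have := Finset.card_erase_lt_of_mem hs
      omega
    have hminb : ∀ s ∈ S, Reach G (S.erase s) b a := fun s hs => (hmin s hs).symm
    -- the two sides
    set A : V → Prop := fun z => z ∉ S ∧ Reach G S a z with hA
    set B : V → Prop := fun z => z ∉ S ∧ Reach G S b z with hB
    have hAB : ∀ z, A z → B z → False := fun z h1 h2 => hsep (h1.2.trans h2.2.symm)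
    have hcrossAB : ∀ z z', A z → B z' → G.Adj z z' → False := by
      intro z z' h1 h2 hadj
      exact hAB z' ⟨h2.1, h1.2.adj hadj h2.1⟩ h2
    -- S is a clique
    have hSclique : ∀ x ∈ S, ∀ y ∈ S, x ≠ y → G.Adj x y := by
      intro x hx y hy hxy
      by_contra hnxy
      have hxA : ¬ A x := fun h => h.1 hx
      have hyA : ¬ A y := fun h => h.1 hy
      have hxB : ¬ B x := fun h => h.1 hx
      have hyB : ¬ B y := fun h => h.1 hy
      -- walks through each side
      have hexA : ∃ w : G.Walk x y, ∀ z ∈ w.support, z = x ∨ z = y ∨ A z := by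
        obtain ⟨x₁, hx₁, hx₁adj⟩ := boundary haS hsep hx (hmin x hx)
        obtain ⟨y₁, hy₁, hy₁adj⟩ := boundary haS hsep hy (hmin y hy)
        obtain ⟨w1, hw1⟩ := hx₁.2
        obtain ⟨w2, hw2⟩ := hy₁.2
        set mid : G.Walk x₁ y₁ := w1.reverse.append w2 with hmid
        have hmids : ∀ z ∈ mid.support, A z := by
          intro z hz
          rw [hmid, SimpleGraph.Walk.mem_support_append_iff] at hz
          rcases hz with hz | hz
          · rw [SimpleGraph.Walk.support_reverse, List.mem_reverse] at hz
            have hzS : z ∉ S := hw1 z hz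
            exact ⟨hzS, ⟨w1.takeUntil z hz, fun r hr =>
              hw1 r (w1.support_takeUntil_subset hz hr)⟩⟩
          · have hzS : z ∉ S := hw2 z hz
            exact ⟨hzS, ⟨w2.takeUntil z hz, fun r hr =>
              hw2 r (w2.support_takeUntil_subset hz hr)⟩⟩
        refine ⟨SimpleGraph.Walk.cons hx₁adj.symm (mid.concat hy₁adj), fun z hz => ?_⟩
        rw [SimpleGraph.Walk.support_cons, List.mem_cons] at hz
        rcases hz with rfl | hz
        · exact Or.inl rfl
        rw [SimpleGraph.Walk.support_concat, List.mem_append] at hz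
        rcases hz with hz | hz
        · exact Or.inr (Or.inr (hmids z hz))
        · rw [List.mem_singleton] at hz
          exact Or.inr (Or.inl hz)
      have hexB : ∃ w : G.Walk x y, ∀ z ∈ w.support, z = x ∨ z = y ∨ B z := by
        obtain ⟨x₁, hx₁, hx₁adj⟩ := boundary hbS hsepb hx (hminb x hx)
        obtain ⟨y₁, hy₁, hy₁adj⟩ := boundary hbS hsepb hy (hminb y hy)
        obtain ⟨w1, hw1⟩ := hx₁.2
        obtain ⟨w2, hw2⟩ := hy₁.2
        set mid : G.Walk x₁ y₁ := w1.reverse.append w2 with hmid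
        have hmids : ∀ z ∈ mid.support, B z := by
          intro z hz
          rw [hmid, SimpleGraph.Walk.mem_support_append_iff] at hz
          rcases hz with hz | hz
          · rw [SimpleGraph.Walk.support_reverse, List.mem_reverse] at hz
            have hzS : z ∉ S := hw1 z hz
            exact ⟨hzS, ⟨w1.takeUntil z hz, fun r hr =>
              hw1 r (w1.support_takeUntil_subset hz hr)⟩⟩
          · have hzS : z ∉ S := hw2 z hz
            exact ⟨hzS, ⟨w2.takeUntil z hz, fun r hr =>
              hw2 r (w2.support_takeUntil_subset hz hr)⟩⟩
        refine ⟨SimpleGraph.Walk.cons hx₁adj.symm (mid.concat hy₁adj), fun z hz => ?_⟩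
        rw [SimpleGraph.Walk.support_cons, List.mem_cons] at hz
        rcases hz with rfl | hz
        · exact Or.inl rfl
        rw [SimpleGraph.Walk.support_concat, List.mem_append] at hz
        rcases hz with hz | hz
        · exact Or.inr (Or.inr (hmids z hz))
        · rw [List.mem_singleton] at hz
          exact Or.inr (Or.inl hz)
      exact sep_clique_aux hG hxy hnxy hxA hyA hxB hyB hAB hcrossAB hexA hexB
    -- recurse on each side
    have hside : ∀ (P : V → Prop) (a₀ : V), (∀ z, P z ↔ (z ∉ S ∧ Reach G S a₀ z)) →
        P a₀ → (∃ z₀, ¬ (P z₀ ∨ z₀ ∈ S)) →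
        ∃ z, P z ∧ Simplicial G z := by
      intro P a₀ hPdef hPa₀ hout
      set Wt := {z : V // P z ∨ z ∈ S} with hWt
      set emb : Wt ↪ V := ⟨Subtype.val, Subtype.val_injective⟩ with hemb
      set Ga : SimpleGraph Wt := G.comap emb with hGa
      have hGa_chordal : Ga.IsChordal := IsChordal.comap emb hG
      obtain ⟨z₀, hz₀⟩ := hout
      have hcard' : Fintype.card Wt ≤ n := by
        have h1 : Fintype.card Wt < Fintype.card V := by
          apply Fintype.card_subtype_lt (x := z₀)
          exact hz₀
        omega
      -- closure of P under adjacency off S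
      have hPadj : ∀ z z', P z → G.Adj z z' → z' ∉ S → P z' := by
        intro z z' hz hadj hz'
        rw [hPdef] at hz ⊢
        exact ⟨hz', hz.2.adj hadj hz'⟩
      have hlift : ∀ z : Wt, P z.1 → Simplicial Ga z → Simplicial G z.1 := by
        intro z hz hsimp p q hp hq hpq
        have hp' : P p ∨ p ∈ S := by
          by_cases h : p ∈ S
          · exact Or.inr h
          · exact Or.inl (hPadj z.1 p hz hp h)
        have hq' : P q ∨ q ∈ S := by
          by_cases h : q ∈ S
          · exact Or.inr h
          · exact Or.inl (hPadj z.1 q hz hq h)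
        have := hsimp ⟨p, hp'⟩ ⟨q, hq'⟩ hp hq (fun h => hpq (congrArg Subtype.val h))
        exact this
      rcases ih Wt Ga hcard' hGa_chordal with hcomp' | ⟨x', y', hxy', hnadj', hsx', hsy'⟩
      · -- complete: a₀ is simplicial
        refine ⟨a₀, hPa₀, hlift ⟨a₀, Or.inl hPa₀⟩ hPa₀ ?_⟩
        intro p q _ _ hpq
        exact hcomp' p q hpq
      · -- two nonadjacent simplicial vertices: one is on the P side
        have : P x'.1 ∨ P y'.1 := by
          rcases x'.2 with h1 | h1
          · exact Or.inl h1
          rcases y'.2 with h2 | h2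
          · exact Or.inr h2
          exfalso
          refine hnadj' (hSclique x'.1 h1 y'.1 h2 ?_)
          exact fun h => hxy' (Subtype.ext h)
        rcases this with h | h
        · exact ⟨x'.1, h, hlift x' h hsx'⟩
        · exact ⟨y'.1, h, hlift y' h hsy'⟩
    have houtA : ∃ z₀, ¬ ((fun z => z ∉ S ∧ Reach G S a z) z₀ ∨ z₀ ∈ S) := by
      refine ⟨b, ?_⟩
      push_neg
      exact ⟨fun _ h => absurd h hsep, hbS⟩
    have houtB : ∃ z₀, ¬ ((fun z => z ∉ S ∧ Reach G S b z) z₀ ∨ z₀ ∈ S) := by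
      refine ⟨a, ?_⟩
      push_neg
      exact ⟨fun _ h => absurd h.symm hsep, haS⟩
    obtain ⟨zA, hzA, hzAsimp⟩ := hside (fun z => z ∉ S ∧ Reach G S a z) a (fun z => Iff.rfl)
      ⟨haS, Reach.refl haS⟩ houtA
    obtain ⟨zB, hzB, hzBsimp⟩ := hside (fun z => z ∉ S ∧ Reach G S b z) b (fun z => Iff.rfl)
      ⟨hbS, Reach.refl hbS⟩ houtB
    refine ⟨zA, zB, ?_, ?_, hzAsimp, hzBsimp⟩
    · rintro rfl
      exact hsep (hzA.2.trans hzB.2.symm)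
    · intro hadj
      exact hsep (hzA.2.trans ((hzA.2.adj hadj hzB.1).symm.trans hzA.2).symm |>.trans hzB.2.symm)

/-- Every nonempty finite chordal graph has a simplicial vertex. -/
theorem exists_simplicial {V : Type u} [Fintype V] [DecidableEq V] [Nonempty V]
    (G : SimpleGraph V) (hG : G.IsChordal) : ∃ v : V, Simplicial G v := by
  rcases dirac (Fintype.card V) V G (le_refl _) hG with h | ⟨x, y, _, _, hx, _⟩
  · refine ⟨Classical.arbitrary V, fun p q hp hq hpq => h p q hpq⟩
  · exact ⟨x, hx⟩

end ChordalAux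

namespace ChordalAux2

open SimpleGraph Finset

universe u
variable {V : Type u} [Fintype V] [DecidableEq V] {G : SimpleGraph V}

open ChordalAux in
lemma exists_maxclique (C : Finset V) (hC : G.IsClique (C : Set V)) :
    ∃ D, G.IsMaxClique D ∧ C ⊆ D := by
  classical
  set F : Finset (Finset V) :=
    Finset.univ.filter (fun D => G.IsClique (D : Set V) ∧ C ⊆ D) with hF
  have hFne : F.Nonempty := ⟨C, by rw [hF, Finset.mem_filter]; exact ⟨mem_univ _, hC, le_refl _⟩⟩
  obtain ⟨D, hDF, hDmax⟩ := F.exists_max_image Finset.card hFne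
  rw [hF, Finset.mem_filter] at hDF
  refine ⟨D, ⟨hDF.2.1, ?_⟩, hDF.2.2⟩
  intro E hE hDE
  have hEF : E ∈ F := by
    rw [hF, Finset.mem_filter]
    exact ⟨mem_univ _, hE, le_trans hDF.2.2 hDE⟩
  exact (Finset.eq_of_subset_of_card_le hDE (hDmax E hEF)).symm

open ChordalAux in
lemma maxclique_of_simplicial {v : V} (hv : ChordalAux.Simplicial G v) {N : Finset V}
    (hN : ∀ x, x ∈ N ↔ G.Adj v x) :
    G.IsMaxClique (insert v N) ∧ ∀ D, G.IsMaxClique D → v ∈ D → D = insert v N := by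
  have hclique : G.IsClique ((insert v N : Finset V) : Set V) := by
    intro x hx y hy hxy
    simp only [coe_insert, Set.mem_insert_iff, mem_coe] at hx hy
    rcases hx with rfl | hx <;> rcases hy with rfl | hy
    · exact absurd rfl hxy
    · exact (hN y).mp hy
    · exact ((hN x).mp hx).symm
    · exact hv x y ((hN x).mp hx) ((hN y).mp hy) hxy
  have hsubmax : ∀ D : Finset V, G.IsClique (D : Set V) → v ∈ D → D ⊆ insert v N := by
    intro D hD hvD d hd
    by_cases hdv : d = v
    · exact hdv ▸ mem_insert_self _ _
    · exact mem_insert_of_mem ((hN d).mpr (hD (by exact_mod_cast hvD) (by exact_mod_cast hd) (fun h => hdv h.symm)))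
  constructor
  · refine ⟨hclique, fun D hD hsub => ?_⟩
    have : D ⊆ insert v N := hsubmax D hD (hsub (mem_insert_self _ _))
    exact le_antisymm this hsub
  · intro D hD hvD
    have h1 : D ⊆ insert v N := hsubmax D hD.1 hvD
    exact (hD.2 _ hclique h1).symm

variable (O : Type*) [Fintype O] [DecidableEq O]

/-- Splitting a function on `V` into its restriction away from `v` and its value at `v`. -/
def splitFun (v : V) : (V → O) ≃ ({x : V // x ≠ v} → O) × O where
  toFun f := (fun x => f x.1, f v)
  invFun fo := fun x => if h : x = v then fo.2 else fo.1 ⟨x, h⟩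
  left_inv f := by
    funext x
    by_cases h : x = v
    · subst h; simp
    · simp [h]
  right_inv fo := by
    refine Prod.ext (funext fun x => ?_) ?_
    · exact dif_neg x.2
    · exact dif_pos rfl

lemma splitFun_symm_apply_ne (v : V) (g : {x : V // x ≠ v} → O) (o : O) {x : V} (h : x ≠ v) :
    (splitFun O v).symm (g, o) x = g ⟨x, h⟩ := dif_neg h

lemma splitFun_symm_apply_self (v : V) (g : {x : V // x ≠ v} → O) (o : O) :
    (splitFun O v).symm (g, o) v = o := dif_pos rfl

/-- Splitting a function on `insert v N` into its restriction to `N` and its value at `v`. -/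
def splitFun₂ (v : V) (N : Finset V) (hv : v ∉ N) :
    (↥(insert v N) → O) ≃ (↥N → O) × O where
  toFun h := (fun x => h ⟨x.1, mem_insert_of_mem x.2⟩, h ⟨v, mem_insert_self _ _⟩)
  invFun go := fun x =>
    if hx : x.1 = v then go.2
    else go.1 ⟨x.1, by
      rcases Finset.mem_insert.mp x.2 with h | h
      · exact absurd h hx
      · exact h⟩
  left_inv h := by
    funext x
    show (if hx : x.1 = v then _ else _) = h x
    by_cases hx : x.1 = v
    · rw [dif_pos hx]
      exact congrArg h (Subtype.ext hx.symm)
    · rw [dif_neg hx]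
  right_inv go := by
    refine Prod.ext (funext fun x => ?_) ?_
    · have hx : (x.1 : V) ≠ v := fun h => hv (h ▸ x.2)
      show (if h' : (x.1 : V) = v then _ else _) = go.1 x
      rw [dif_neg hx]
    · show (if h' : v = v then _ else _) = go.2
      rw [dif_pos rfl]

lemma splitFun₂_symm_apply_ne (v : V) (N : Finset V) (hv : v ∉ N) (g : ↥N → O) (o : O)
    (x : ↥(insert v N)) (h : (x : V) ≠ v) (hx : (x : V) ∈ N) :
    (splitFun₂ O v N hv).symm (g, o) x = g ⟨x, hx⟩ := by
  simp only [splitFun₂, Equiv.coe_fn_symm_mk]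
  rw [dif_neg h]

lemma splitFun₂_symm_apply_self (v : V) (N : Finset V) (hv : v ∉ N) (g : ↥N → O) (o : O)
    (x : ↥(insert v N)) (h : (x : V) = v) :
    (splitFun₂ O v N hv).symm (g, o) x = o := by
  simp only [splitFun₂, Equiv.coe_fn_symm_mk]
  rw [dif_pos h]

lemma splitFun₂_fst (v : V) (N : Finset V) (hv : v ∉ N) (g : ↥(insert v N) → O) :
    ((splitFun₂ O v N hv) g).1 = fun x => g ⟨x.1, mem_insert_of_mem x.2⟩ := rfl

lemma pushf_restrict_of_eq {A B : Finset V} (hAB : A = B) (hmem : ∀ x : ↥B, x.1 ∈ A)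
    (q : (↥A → O) → ℝ) (g : ↥B → O) :
    pushf (fun (f : ↥A → O) (x : ↥B) => f ⟨x.1, hmem x⟩) q g
      = q (fun y : ↥A => g ⟨y.1, hAB ▸ y.2⟩) := by
  subst hAB
  have h1 : (fun (f : ↥A → O) (x : ↥A) => f ⟨x.1, hmem x⟩) = fun f => f := by
    funext f x; rfl
  rw [h1]
  show (∑ f : ↥A → O, if f = g then q f else 0) = _
  rw [Finset.sum_ite_eq' Finset.univ g q]
  simp

lemma apply_transport {W : Type*} (p : (C : Finset V) → (↥C → W) → ℝ) {A B : Finset V}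
    (hAB : A = B) (g : ↥B → W) :
    p A (fun y : ↥A => g ⟨y.1, hAB ▸ y.2⟩) = p B g := by
  subst hAB; rfl

end ChordalAux2


namespace ChordalAux2

open SimpleGraph Finset ChordalAux

universe u

theorem key (O : Type*) [Fintype O] [DecidableEq O] [Nonempty O] :
    ∀ (n : ℕ) (V : Type u) [Fintype V] [DecidableEq V] (G : SimpleGraph V),
      Fintype.card V ≤ n → G.IsChordal →
      ∀ p : (C : Finset V) → (↥C → O) → ℝ,
        (∀ C, G.IsMaxClique C → ∀ f, 0 ≤ p C f) →
        (∀ C, G.IsMaxClique C → ∑ f, p C f = 1) →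
        (∀ C D, G.IsMaxClique C → G.IsMaxClique D →
          pushf (fun (f : ↥C → O) (x : ↥(C ∩ D)) => f ⟨x.1, (Finset.mem_inter.mp x.2).1⟩) (p C)
            = pushf (fun (f : ↥D → O) (x : ↥(C ∩ D)) => f ⟨x.1, (Finset.mem_inter.mp x.2).2⟩)
                (p D)) →
        ∃ P : (V → O) → ℝ, (∀ f, 0 ≤ P f) ∧ (∑ f, P f = 1) ∧
          ∀ C, G.IsMaxClique C → p C = pushf (fun (f : V → O) (x : ↥C) => f x.1) P := by
  intro n
  induction n with
  | zero =>
    intro V _ _ G hcard hG p h0 h1 hcpt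
    have hVempty : IsEmpty V := Fintype.card_eq_zero_iff.mp (Nat.le_zero.mp hcard)
    have hcard1 : Fintype.card (V → O) = 1 :=
      Fintype.card_eq_one_iff.mpr ⟨fun x => hVempty.elim x, fun f => funext fun x => hVempty.elim x⟩
    refine ⟨fun _ => 1, fun _ => zero_le_one, ?_, ?_⟩
    · rw [Finset.sum_const, Finset.card_univ, hcard1, one_smul]
    · intro C hC
      have hCempty : IsEmpty ↥C := ⟨fun x => hVempty.elim x.1⟩
      funext g
      have hall : ∀ f : ↥C → O, f = g := fun f => funext fun x => hCempty.elim x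
      have hcardC : Fintype.card (↥C → O) = 1 := Fintype.card_eq_one_iff.mpr ⟨g, hall⟩
      have lhs : p C g = 1 := by
        rw [← h1 C hC]
        have : ∀ f : ↥C → O, p C f = p C g := fun f => by rw [hall f]
        rw [Finset.sum_congr rfl (fun f _ => this f), Finset.sum_const, Finset.card_univ,
          hcardC, one_smul]
      have rhs : pushf (fun (f : V → O) (x : ↥C) => f x.1) (fun _ => 1) g = 1 := by
        show (∑ f : V → O, if (fun (x : ↥C) => f x.1) = g then (1:ℝ) else 0) = 1
        have hcond : ∀ f : V → O, (fun (x : ↥C) => f x.1) = g :=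
          fun f => funext fun x => hCempty.elim x
        simp only [hcond, if_pos rfl, if_true]
        rw [Finset.sum_const, Finset.card_univ, hcard1, one_smul]
      rw [lhs, rhs]
  | succ n ih =>
    intro V _ _ G hcard hG p h0 h1 hcpt
    by_cases hle : Fintype.card V ≤ n
    · exact ih V G hle hG p h0 h1 hcpt
    have hVne : Nonempty V := Fintype.card_pos_iff.mp (by omega)
    classical
    obtain ⟨v, hv⟩ := ChordalAux.exists_simplicial G hG
    set N : Finset V := Finset.univ.filter (fun x => G.Adj v x) with hNdef
    have hN : ∀ x, x ∈ N ↔ G.Adj v x := fun x => by simp [hNdef]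
    obtain ⟨hC₀max, huniq⟩ := maxclique_of_simplicial hv hN
    have hvN : v ∉ N := fun h => G.irrefl ((hN v).mp h)
    have hNC₀ : ∀ x : ↥N, x.1 ∈ insert v N := fun x => mem_insert_of_mem x.2
    have hneN : ∀ x : ↥N, x.1 ≠ v := fun x h => hvN (h ▸ x.2)
    -- the graph with v removed
    set G' : SimpleGraph {x : V // x ≠ v} :=
      G.comap (⟨Subtype.val, Subtype.val_injective⟩ : {x : V // x ≠ v} ↪ V) with hG'def
    have hG'chordal : G'.IsChordal := ChordalAux.IsChordal.comap _ hG
    have hcard' : Fintype.card {x : V // x ≠ v} ≤ n := by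
      have h2 : Fintype.card {x : V // x ≠ v} < Fintype.card V :=
        Fintype.card_subtype_lt (x := v) (by simp)
      omega
    set img : Finset {x : V // x ≠ v} → Finset V := fun C' => C'.image Subtype.val with himgdef
    have himgmem : ∀ (C' : Finset {x : V // x ≠ v}) (x : ↥C'), x.1.1 ∈ img C' :=
      fun C' x => Finset.mem_image_of_mem _ x.2
    have himgclique : ∀ C' : Finset {x : V // x ≠ v},
        G'.IsClique (C' : Set _) → G.IsClique ((img C') : Set V) := by
      intro C' h x hx y hy hxy
      simp only [himgdef, coe_image, Set.mem_image, mem_coe] at hx hy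
      obtain ⟨x₀, hx₀, rfl⟩ := hx
      obtain ⟨y₀, hy₀, rfl⟩ := hy
      exact h (by exact_mod_cast hx₀) (by exact_mod_cast hy₀)
        (fun hc => hxy (congrArg Subtype.val hc))
    have hextend : ∀ C' : Finset {x : V // x ≠ v},
        ∃ D, G.IsMaxClique D ∧ (G'.IsClique (C' : Set _) → img C' ⊆ D) := by
      intro C'
      by_cases h : G'.IsClique (C' : Set _)
      · obtain ⟨D, hD, hsub⟩ := exists_maxclique (img C') (himgclique C' h)
        exact ⟨D, hD, fun _ => hsub⟩
      · obtain ⟨D, hD, -⟩ := exists_maxclique (∅ : Finset V) (by simp)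
        exact ⟨D, hD, fun hc => absurd hc h⟩
    choose Dex hDexMax hDexSub using hextend
    -- the distributions for the smaller graph
    set p' : (C' : Finset {x : V // x ≠ v}) → (↥C' → O) → ℝ := fun C' g =>
      ∑ f : ↥(Dex C') → O,
        if (∀ (x : ↥C') (hx : x.1.1 ∈ Dex C'), f ⟨x.1.1, hx⟩ = g x) then p (Dex C') f else 0
      with hp'def
    have hp'eq : ∀ (C' : Finset {x : V // x ≠ v}) (hc : G'.IsClique (C' : Set _)),
        p' C' = pushf
          (fun (f : ↥(Dex C') → O) (x : ↥C') => f ⟨x.1.1, hDexSub C' hc (himgmem C' x)⟩)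
          (p (Dex C')) := by
      intro C' hc
      funext g
      show (∑ f : ↥(Dex C') → O,
        if (∀ (x : ↥C') (hx : x.1.1 ∈ Dex C'), f ⟨x.1.1, hx⟩ = g x) then p (Dex C') f else 0) = _
      simp only [pushf]
      refine Finset.sum_congr rfl fun f _ => if_congr ?_ rfl rfl
      constructor
      · intro h; funext x; exact h x _
      · intro h x hx
        exact congrFun h x
    have hnn' : ∀ C', G'.IsMaxClique C' → ∀ g, 0 ≤ p' C' g := by
      intro C' hC' g
      refine Finset.sum_nonneg fun f _ => ?_
      split
      · exact h0 _ (hDexMax C') f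
      · exact le_refl 0
    have hnorm' : ∀ C', G'.IsMaxClique C' → ∑ g, p' C' g = 1 := by
      intro C' hC'
      rw [hp'eq C' hC'.1, sum_pushf]
      exact h1 _ (hDexMax C')
    have hcompat' : ∀ C' D', G'.IsMaxClique C' → G'.IsMaxClique D' →
        pushf (fun (f : ↥C' → O) (x : ↥(C' ∩ D')) => f ⟨x.1, (Finset.mem_inter.mp x.2).1⟩)
            (p' C')
          = pushf (fun (f : ↥D' → O) (x : ↥(C' ∩ D')) => f ⟨x.1, (Finset.mem_inter.mp x.2).2⟩)
              (p' D') := by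
      intro C' D' hC' hD'
      have hmm : ∀ x : ↥(C' ∩ D'), x.1.1 ∈ Dex C' ∩ Dex D' := by
        intro x
        refine Finset.mem_inter.mpr ⟨?_, ?_⟩
        · exact hDexSub C' hC'.1 (Finset.mem_image_of_mem _ (Finset.mem_inter.mp x.2).1)
        · exact hDexSub D' hD'.1 (Finset.mem_image_of_mem _ (Finset.mem_inter.mp x.2).2)
      calc pushf (fun (f : ↥C' → O) (x : ↥(C' ∩ D')) => f ⟨x.1, (Finset.mem_inter.mp x.2).1⟩)
              (p' C')
          = pushf (fun (f : ↥C' → O) (x : ↥(C' ∩ D')) => f ⟨x.1, (Finset.mem_inter.mp x.2).1⟩)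
              (pushf (fun (f : ↥(Dex C') → O) (x : ↥C') =>
                f ⟨x.1.1, hDexSub C' hC'.1 (himgmem C' x)⟩) (p (Dex C'))) := by
            rw [hp'eq C' hC'.1]
        _ = pushf (fun (h : ↥(Dex C' ∩ Dex D') → O) (x : ↥(C' ∩ D')) => h ⟨x.1.1, hmm x⟩)
              (pushf (fun (f : ↥(Dex C') → O) (y : ↥(Dex C' ∩ Dex D')) =>
                f ⟨y.1, (Finset.mem_inter.mp y.2).1⟩) (p (Dex C'))) := by
            rw [pushf_comp, pushf_comp]; rfl
        _ = pushf (fun (h : ↥(Dex C' ∩ Dex D') → O) (x : ↥(C' ∩ D')) => h ⟨x.1.1, hmm x⟩)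
              (pushf (fun (f : ↥(Dex D') → O) (y : ↥(Dex C' ∩ Dex D')) =>
                f ⟨y.1, (Finset.mem_inter.mp y.2).2⟩) (p (Dex D'))) := by
            rw [hcpt (Dex C') (Dex D') (hDexMax C') (hDexMax D')]
        _ = pushf (fun (f : ↥D' → O) (x : ↥(C' ∩ D')) => f ⟨x.1, (Finset.mem_inter.mp x.2).2⟩)
              (pushf (fun (f : ↥(Dex D') → O) (x : ↥D') =>
                f ⟨x.1.1, hDexSub D' hD'.1 (himgmem D' x)⟩) (p (Dex D'))) := by
            rw [pushf_comp, pushf_comp]; rfl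
        _ = pushf (fun (f : ↥D' → O) (x : ↥(C' ∩ D')) => f ⟨x.1, (Finset.mem_inter.mp x.2).2⟩)
              (p' D') := by
            rw [hp'eq D' hD'.1]
    obtain ⟨P', hP'0, hP'1, hP'marg⟩ :=
      ih {x : V // x ≠ v} G' hcard' hG'chordal p' hnn' hnorm' hcompat'
    -- the marginal on N and the conditional construction
    set rNC₀ : (↥(insert v N) → O) → (↥N → O) := fun f x => f ⟨x.1, hNC₀ x⟩ with hrNC₀
    set m : (↥N → O) → ℝ := pushf rNC₀ (p (insert v N)) with hm
    have hm0 : ∀ g, 0 ≤ m g := fun g => pushf_nonneg (h0 _ hC₀max) g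
    set rV'N : ({x : V // x ≠ v} → O) → (↥N → O) := fun f' x => f' ⟨x.1, hneN x⟩ with hrV'N
    -- (M1) : the marginal of P' on N is m
    have hM1 : pushf rV'N P' = m := by
      set N' : Finset {x : V // x ≠ v} := N.subtype (fun x => x ≠ v) with hN'def
      have hmemN' : ∀ x : ↥N, (⟨x.1, hneN x⟩ : {x : V // x ≠ v}) ∈ N' := by
        intro x; rw [hN'def, Finset.mem_subtype]; exact x.2
      have hN'clique : G'.IsClique (N' : Set _) := by
        intro x hx y hy hxy
        have hx' : x.1 ∈ N := by
          have hx2 : x ∈ N' := by exact_mod_cast hx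
          rw [hN'def, Finset.mem_subtype] at hx2; exact hx2
        have hy' : y.1 ∈ N := by
          have hy2 : y ∈ N' := by exact_mod_cast hy
          rw [hN'def, Finset.mem_subtype] at hy2; exact hy2
        have hadj : G.Adj x.1 y.1 := by
          refine hC₀max.1 ?_ ?_ (fun h => hxy (Subtype.ext h))
          · exact_mod_cast mem_insert_of_mem hx'
          · exact_mod_cast mem_insert_of_mem hy'
        exact hadj
      obtain ⟨E', hE'max, hE'sub⟩ := exists_maxclique (G := G') N' hN'clique
      have hNE' : ∀ x : ↥N, (⟨x.1, hneN x⟩ : {x : V // x ≠ v}) ∈ E' :=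
        fun x => hE'sub (hmemN' x)
      have hmm2 : ∀ x : ↥N, x.1 ∈ (insert v N) ∩ Dex E' := by
        intro x
        refine Finset.mem_inter.mpr ⟨hNC₀ x, hDexSub E' hE'max.1 ?_⟩
        exact Finset.mem_image_of_mem _ (hNE' x)
      calc pushf rV'N P'
          = pushf (fun (f : ↥E' → O) (x : ↥N) => f ⟨⟨x.1, hneN x⟩, hNE' x⟩)
              (pushf (fun (f' : {x : V // x ≠ v} → O) (y : ↥E') => f' y.1) P') := by
            rw [pushf_comp]; rfl
        _ = pushf (fun (f : ↥E' → O) (x : ↥N) => f ⟨⟨x.1, hneN x⟩, hNE' x⟩) (p' E') := by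
            rw [hP'marg E' hE'max]
        _ = pushf (fun (f : ↥E' → O) (x : ↥N) => f ⟨⟨x.1, hneN x⟩, hNE' x⟩)
              (pushf (fun (f : ↥(Dex E') → O) (x : ↥E') =>
                f ⟨x.1.1, hDexSub E' hE'max.1 (himgmem E' x)⟩) (p (Dex E'))) := by
            rw [hp'eq E' hE'max.1]
        _ = pushf (fun (h : ↥((insert v N) ∩ Dex E') → O) (x : ↥N) => h ⟨x.1, hmm2 x⟩)
              (pushf (fun (f : ↥(Dex E') → O) (y : ↥((insert v N) ∩ Dex E')) =>
                f ⟨y.1, (Finset.mem_inter.mp y.2).2⟩) (p (Dex E'))) := by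
            rw [pushf_comp, pushf_comp]; rfl
        _ = pushf (fun (h : ↥((insert v N) ∩ Dex E') → O) (x : ↥N) => h ⟨x.1, hmm2 x⟩)
              (pushf (fun (f : ↥(insert v N) → O) (y : ↥((insert v N) ∩ Dex E')) =>
                f ⟨y.1, (Finset.mem_inter.mp y.2).1⟩) (p (insert v N))) := by
            rw [← hcpt (insert v N) (Dex E') hC₀max (hDexMax E')]
        _ = m := by
            rw [pushf_comp, hm]; rfl
    -- the equivalences
    set eV := splitFun O (V := V) v with heV
    set eC := splitFun₂ O (V := V) v N hvN with heC
    set resV' : (V → O) → ({x : V // x ≠ v} → O) := fun f x' => f x'.1 with hresV'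
    set resC₀ : (V → O) → (↥(insert v N) → O) := fun f x => f x.1 with hresC₀
    set resN : (V → O) → (↥N → O) := fun f x => f x.1 with hresN
    set P : (V → O) → ℝ := fun f =>
      if m (resN f) = 0 then 0
      else P' (resV' f) * p (insert v N) (resC₀ f) / m (resN f) with hP
    have hA1 : ∀ (g : {x : V // x ≠ v} → O) (o : O), resV' (eV.symm (g, o)) = g := by
      intro g o; funext x'
      exact splitFun_symm_apply_ne O v g o x'.2
    have hA2 : ∀ (g : {x : V // x ≠ v} → O) (o : O), resN (eV.symm (g, o)) = rV'N g := by
      intro g o; funext x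
      exact splitFun_symm_apply_ne O v g o (hneN x)
    have hA3 : ∀ (g : {x : V // x ≠ v} → O) (o : O),
        resC₀ (eV.symm (g, o)) = eC.symm (rV'N g, o) := by
      intro g o; funext x
      by_cases hx : (x.1 : V) = v
      · rw [splitFun₂_symm_apply_self O v N hvN _ _ x hx]
        show (splitFun O v).symm (g, o) x.1 = o
        rw [hx]
        exact splitFun_symm_apply_self O v g o
      · have hxN : (x.1 : V) ∈ N := by
          rcases Finset.mem_insert.mp x.2 with h | h
          · exact absurd h hx
          · exact h
        rw [splitFun₂_symm_apply_ne O v N hvN _ _ x hx hxN]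
        exact splitFun_symm_apply_ne O v g o hx
    have hA4 : ∀ (h : ↥N → O) (o : O), rNC₀ (eC.symm (h, o)) = h := by
      intro h o; funext x
      exact splitFun₂_symm_apply_ne O v N hvN h o _ (hneN x) x.2
    -- (M3)
    have hM3 : ∀ h : ↥N → O, (∑ o : O, p (insert v N) (eC.symm (h, o))) = m h := by
      intro h
      have e1 : m h = ∑ f : ↥(insert v N) → O,
          if rNC₀ f = h then p (insert v N) f else 0 := rfl
      rw [e1, ← Equiv.sum_comp eC.symm
        (fun f => if rNC₀ f = h then p (insert v N) f else 0), Fintype.sum_prod_type]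
      have e2 : ∀ (g : ↥N → O) (o : O),
          (if rNC₀ (eC.symm (g, o)) = h then p (insert v N) (eC.symm (g, o)) else 0)
            = if g = h then p (insert v N) (eC.symm (g, o)) else 0 := by
        intro g o; rw [hA4]
      rw [Finset.sum_congr rfl (fun g _ => Finset.sum_congr rfl (fun o _ => e2 g o))]
      have e3 : ∀ g : ↥N → O, (∑ o : O, if g = h then p (insert v N) (eC.symm (g, o)) else 0)
          = if g = h then (∑ o : O, p (insert v N) (eC.symm (g, o))) else 0 := by
        intro g; split <;> simp
      rw [Finset.sum_congr rfl (fun g _ => e3 g),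
        Finset.sum_ite_eq' Finset.univ h (fun g => ∑ o : O, p (insert v N) (eC.symm (g, o)))]
      simp
    -- (M2)
    have hM2 : pushf resV' P = P' := by
      funext f'
      have e1 : pushf resV' P f' = ∑ f : V → O, if resV' f = f' then P f else 0 := rfl
      rw [e1, ← Equiv.sum_comp eV.symm (fun f => if resV' f = f' then P f else 0),
        Fintype.sum_prod_type]
      have e2 : ∀ (g : {x : V // x ≠ v} → O) (o : O),
          (if resV' (eV.symm (g, o)) = f' then P (eV.symm (g, o)) else 0)
            = if g = f' then P (eV.symm (g, o)) else 0 := fun g o => by rw [hA1]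
      rw [Finset.sum_congr rfl (fun g _ => Finset.sum_congr rfl fun o _ => e2 g o)]
      have e3 : ∀ g : {x : V // x ≠ v} → O,
          (∑ o : O, if g = f' then P (eV.symm (g, o)) else 0)
            = if g = f' then (∑ o : O, P (eV.symm (g, o))) else 0 := fun g => by split <;> simp
      rw [Finset.sum_congr rfl fun g _ => e3 g,
        Finset.sum_ite_eq' Finset.univ f' (fun g => ∑ o : O, P (eV.symm (g, o))),
        if_pos (Finset.mem_univ f')]
      have e4 : ∀ o : O, P (eV.symm (f', o)) = if m (rV'N f') = 0 then 0
          else P' f' * p (insert v N) (eC.symm (rV'N f', o)) / m (rV'N f') := by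
        intro o
        have e5 : P (eV.symm (f', o)) = if m (resN (eV.symm (f', o))) = 0 then 0
            else P' (resV' (eV.symm (f', o))) * p (insert v N) (resC₀ (eV.symm (f', o)))
              / m (resN (eV.symm (f', o))) := rfl
        rw [e5, hA2, hA1, hA3]
      rw [Finset.sum_congr rfl fun o _ => e4 o]
      by_cases hz : m (rV'N f') = 0
      · have hle' : P' f' ≤ pushf rV'N P' (rV'N f') := le_pushf hP'0 f'
        rw [hM1, hz] at hle'
        have hge := hP'0 f'
        simp only [hz, if_pos]
        rw [Finset.sum_const]
        simp only [smul_zero]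
        linarith
      · simp only [if_neg hz]
        rw [← Finset.sum_div, ← Finset.mul_sum, hM3 (rV'N f'), mul_div_assoc,
          div_self hz, mul_one]
    have htot : ∑ f, P f = 1 := by
      have hs := sum_pushf resV' P
      rw [hM2] at hs
      rw [← hs]
      exact hP'1
    have hP0 : ∀ f, 0 ≤ P f := by
      intro f
      have hPf : P f = if m (resN f) = 0 then 0
          else P' (resV' f) * p (insert v N) (resC₀ f) / m (resN f) := rfl
      rw [hPf]
      split
      · exact le_refl 0
      · exact div_nonneg (mul_nonneg (hP'0 _) (h0 _ hC₀max _)) (hm0 _)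
    refine ⟨P, hP0, htot, ?_⟩
    intro C hC
    by_cases hvC : v ∈ C
    · -- C is the closed neighbourhood of v
      have hCeq : C = insert v N := huniq C hC hvC
      subst hCeq
      funext g
      symm
      calc pushf (fun (f : V → O) (x : ↥(insert v N)) => f x.1) P g
          = ∑ f : V → O, if resC₀ f = g then P f else 0 := rfl
        _ = ∑ go : ({x : V // x ≠ v} → O) × O,
              if resC₀ (eV.symm go) = g then P (eV.symm go) else 0 :=
            (Equiv.sum_comp eV.symm _).symm
        _ = ∑ f' : {x : V // x ≠ v} → O, ∑ o : O,
              if (rV'N f', o) = eC g then P (eV.symm (f', o)) else 0 := by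
            rw [Fintype.sum_prod_type]
            refine Finset.sum_congr rfl fun f' _ => Finset.sum_congr rfl fun o _ =>
              if_congr ?_ rfl rfl
            rw [hA3 f' o, Equiv.symm_apply_eq]
        _ = ∑ f' : {x : V // x ≠ v} → O, ∑ o : O,
              if rV'N f' = (eC g).1 ∧ o = (eC g).2 then P (eV.symm (f', o)) else 0 := by
            refine Finset.sum_congr rfl fun f' _ => Finset.sum_congr rfl fun o _ =>
              if_congr ?_ rfl rfl
            exact Prod.ext_iff
        _ = ∑ f' : {x : V // x ≠ v} → O,
              if rV'N f' = (eC g).1 then P (eV.symm (f', (eC g).2)) else 0 := by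
            refine Finset.sum_congr rfl fun f' _ => ?_
            by_cases hc : rV'N f' = (eC g).1
            · simp only [hc, true_and]
              rw [Finset.sum_ite_eq' Finset.univ ((eC g).2) (fun o => P (eV.symm (f', o)))]
              simp
            · simp [hc]
        _ = ∑ f' : {x : V // x ≠ v} → O,
              if rV'N f' = (eC g).1 then
                (if m ((eC g).1) = 0 then 0 else P' f' * p (insert v N) g / m ((eC g).1))
              else 0 := by
            refine Finset.sum_congr rfl fun f' _ => ?_
            by_cases hc : rV'N f' = (eC g).1
            · rw [if_pos hc, if_pos hc]
              have hPf : P (eV.symm (f', (eC g).2))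
                  = if m (resN (eV.symm (f', (eC g).2))) = 0 then 0
                    else P' (resV' (eV.symm (f', (eC g).2)))
                      * p (insert v N) (resC₀ (eV.symm (f', (eC g).2)))
                      / m (resN (eV.symm (f', (eC g).2))) := rfl
              rw [hPf, hA2, hA1, hA3, hc]
              rw [show ((eC g).1, (eC g).2) = eC g from rfl, Equiv.symm_apply_apply]
            · rw [if_neg hc, if_neg hc]
        _ = (if m ((eC g).1) = 0 then 0 else p (insert v N) g) := by
            by_cases hz : m ((eC g).1) = 0
            · simp [hz]
            · simp only [if_neg hz]
              have e6 : ∀ f' : {x : V // x ≠ v} → O,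
                  (if rV'N f' = (eC g).1 then P' f' * p (insert v N) g / m ((eC g).1) else 0)
                    = (if rV'N f' = (eC g).1 then P' f' else 0)
                      * (p (insert v N) g / m ((eC g).1)) := by
                intro f'
                split
                · rw [mul_div_assoc]
                · rw [zero_mul]
              rw [Finset.sum_congr rfl fun f' _ => e6 f', ← Finset.sum_mul]
              have e7 : (∑ f' : {x : V // x ≠ v} → O, if rV'N f' = (eC g).1 then P' f' else 0)
                  = m ((eC g).1) := by
                rw [← hM1]; rfl
              rw [e7, mul_div_cancel₀ _ hz]
        _ = p (insert v N) g := by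
            by_cases hz : m ((eC g).1) = 0
            · rw [if_pos hz]
              have h5 : (eC g).1 = rNC₀ g := rfl
              have hle' : p (insert v N) g ≤ pushf rNC₀ (p (insert v N)) (rNC₀ g) :=
                le_pushf (h0 _ hC₀max) g
              have hmz : pushf rNC₀ (p (insert v N)) (rNC₀ g) = 0 := by
                rw [← hm, ← h5, hz]
              rw [hmz] at hle'
              linarith [h0 _ hC₀max g]
            · rw [if_neg hz]
    · -- C avoids v
      set C'' : Finset {x : V // x ≠ v} := C.subtype (fun x => x ≠ v) with hC''def
      have hneC : ∀ x : ↥C, x.1 ≠ v := fun x h => hvC (h ▸ x.2)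
      have hmemC'' : ∀ x : ↥C, (⟨x.1, hneC x⟩ : {x : V // x ≠ v}) ∈ C'' := by
        intro x; rw [hC''def, Finset.mem_subtype]; exact x.2
      have hC''clique : G'.IsClique (C'' : Set _) := by
        intro x hx y hy hxy
        have hx' : x.1 ∈ C := by
          have hx2 : x ∈ C'' := by exact_mod_cast hx
          rw [hC''def, Finset.mem_subtype] at hx2; exact hx2
        have hy' : y.1 ∈ C := by
          have hy2 : y ∈ C'' := by exact_mod_cast hy
          rw [hC''def, Finset.mem_subtype] at hy2; exact hy2
        have hadj : G.Adj x.1 y.1 := by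
          refine hC.1 ?_ ?_ (fun h => hxy (Subtype.ext h))
          · exact_mod_cast hx'
          · exact_mod_cast hy'
        exact hadj
      have himgC'' : img C'' = C := by
        ext x
        simp only [himgdef, Finset.mem_image]
        constructor
        · rintro ⟨y, hy, rfl⟩
          rw [hC''def, Finset.mem_subtype] at hy; exact hy
        · intro hx
          exact ⟨⟨x, fun h => hvC (h ▸ hx)⟩, by rw [hC''def, Finset.mem_subtype]; exact hx, rfl⟩
      have hC''max : G'.IsMaxClique C'' := by
        refine ⟨hC''clique, fun E' hE' hsub => ?_⟩
        have h1' : C ⊆ img E' := by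
          rw [← himgC'']; exact Finset.image_subset_image hsub
        have h2' : img E' = C := hC.2 (img E') (himgclique E' hE') h1'
        refine Finset.Subset.antisymm ?_ hsub
        intro x hx
        rw [hC''def, Finset.mem_subtype, ← h2']
        exact Finset.mem_image_of_mem _ hx
      have hDexC'' : Dex C'' = C := by
        have h1' := hDexSub C'' hC''clique
        rw [himgC''] at h1'
        exact hC.2 (Dex C'') (hDexMax C'').1 h1'
      have hmm3 : ∀ x : ↥C, x.1 ∈ Dex C'' := fun x => by rw [hDexC'']; exact x.2
      funext g
      calc p C g
          = p (Dex C'') (fun y : ↥(Dex C'') => g ⟨y.1, hDexC'' ▸ y.2⟩) :=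
            (apply_transport p hDexC'' g).symm
        _ = pushf (fun (f : ↥(Dex C'') → O) (x : ↥C) => f ⟨x.1, hmm3 x⟩) (p (Dex C'')) g :=
            (pushf_restrict_of_eq O hDexC'' hmm3 (p (Dex C'')) g).symm
        _ = pushf (fun (h : ↥C'' → O) (x : ↥C) => h ⟨⟨x.1, hneC x⟩, hmemC'' x⟩)
              (pushf (fun (f : ↥(Dex C'') → O) (y : ↥C'') =>
                f ⟨y.1.1, hDexSub C'' hC''clique (himgmem C'' y)⟩) (p (Dex C''))) g := by
            rw [pushf_comp]; rfl
        _ = pushf (fun (h : ↥C'' → O) (x : ↥C) => h ⟨⟨x.1, hneC x⟩, hmemC'' x⟩) (p' C'') g := by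
            rw [hp'eq C'' hC''clique]
        _ = pushf (fun (h : ↥C'' → O) (x : ↥C) => h ⟨⟨x.1, hneC x⟩, hmemC'' x⟩)
              (pushf (fun (f' : {x : V // x ≠ v} → O) (y : ↥C'') => f' y.1) P') g := by
            rw [hP'marg C'' hC''max]
        _ = pushf (fun (f' : {x : V // x ≠ v} → O) (x : ↥C) => f' ⟨x.1, hneC x⟩) P' g := by
            rw [pushf_comp]; rfl
        _ = pushf (fun (f' : {x : V // x ≠ v} → O) (x : ↥C) => f' ⟨x.1, hneC x⟩)
              (pushf resV' P) g := by
            rw [hM2]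
        _ = pushf (fun (f : V → O) (x : ↥C) => f x.1) P g := by
            rw [pushf_comp]; rfl

end ChordalAux2

/-- Let `G` be a finite chordal graph and `O` a finite nonempty
outcome set. Given a probability distribution `p C` on `C → O` for every maximal
clique `C`, such that any two of them have equal marginals on the intersection of
the corresponding cliques, there is a joint probability distribution `P` on
`V → O` whose marginal on every maximal clique `C` is `p C`. -/
theorem chordal_joint_distribution
    {V O : Type*} [Fintype V] [DecidableEq V] [Fintype O] [DecidableEq O]
    [Nonempty O] (G : SimpleGraph V) (hG : G.IsChordal)
    (p : (C : Finset V) → (C → O) → ℝ)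
    (hnonneg : ∀ C : Finset V, G.IsMaxClique C → ∀ f : C → O, 0 ≤ p C f)
    (hnorm : ∀ C : Finset V, G.IsMaxClique C → ∑ f : C → O, p C f = 1)
    (hcompat : ∀ C D : Finset V, G.IsMaxClique C → G.IsMaxClique D →
      ∀ g : (C ∩ D : Finset V) → O,
        (∑ f : C → O,
          if ∀ x : (C ∩ D : Finset V), f ⟨x.1, (Finset.mem_inter.mp x.2).1⟩ = g x
            then p C f else 0)
        = ∑ f : D → O,
            if ∀ x : (C ∩ D : Finset V), f ⟨x.1, (Finset.mem_inter.mp x.2).2⟩ = g x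
              then p D f else 0) :
    ∃ P : (V → O) → ℝ, (∀ f, 0 ≤ P f) ∧ (∑ f, P f = 1) ∧
      ∀ C : Finset V, G.IsMaxClique C → ∀ g : C → O,
        p C g = ∑ f : V → O, if (∀ x : C, f x.1 = g x) then P f else 0 := by
  have hcpt : ∀ C D : Finset V, G.IsMaxClique C → G.IsMaxClique D →
      pushf (fun (f : ↥C → O) (x : ↥(C ∩ D)) => f ⟨x.1, (Finset.mem_inter.mp x.2).1⟩) (p C)
        = pushf (fun (f : ↥D → O) (x : ↥(C ∩ D)) => f ⟨x.1, (Finset.mem_inter.mp x.2).2⟩)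
            (p D) := by
    intro C D hC hD
    funext g
    calc pushf (fun (f : ↥C → O) (x : ↥(C ∩ D)) => f ⟨x.1, (Finset.mem_inter.mp x.2).1⟩)
            (p C) g
        = ∑ f : ↥C → O,
            if ∀ x : ↥(C ∩ D), f ⟨x.1, (Finset.mem_inter.mp x.2).1⟩ = g x
              then p C f else 0 :=
          (sum_ite_forall_eq
            (fun (x : ↥(C ∩ D)) => (⟨x.1, (Finset.mem_inter.mp x.2).1⟩ : ↥C)) (p C) g).symm
      _ = ∑ f : ↥D → O,
            if ∀ x : ↥(C ∩ D), f ⟨x.1, (Finset.mem_inter.mp x.2).2⟩ = g x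
              then p D f else 0 := hcompat C D hC hD g
      _ = pushf (fun (f : ↥D → O) (x : ↥(C ∩ D)) => f ⟨x.1, (Finset.mem_inter.mp x.2).2⟩)
            (p D) g :=
          sum_ite_forall_eq
            (fun (x : ↥(C ∩ D)) => (⟨x.1, (Finset.mem_inter.mp x.2).2⟩ : ↥D)) (p D) g
  obtain ⟨P, h0, h1, hm⟩ := ChordalAux2.key O (Fintype.card V) V G (le_refl _) hG p
    hnonneg hnorm hcpt
  refine ⟨P, h0, h1, ?_⟩
  intro C hC g
  rw [hm C hC]
  exact (sum_ite_forall_eq (fun x : ↥C => x.1) P g).symm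
end

section
/- Let G be a finite simple graph with vertex set V, let α : V → ℝ and β : E(G) → ℝ, and for an assignment a : V → {−1,+1} define E(a) = Σ_{v∈V} α(v) a(v) + Σ_{{u,v}∈E(G)} β({u,v}) a(u)a(v). Suppose there exist induced subgraphs G_1, …, G_r of G, each chordal, together with decompositions α = Σ_{j=1}^r α^{(j)} and β = Σ_{j=1}^r β^{(j)} where α^{(j)} is supported on V(G_j) and β^{(j)} is supported on E(G_j), and set ω_j = max over assignments a : V(G_j) → {−1,+1} of E_j(a) = Σ_{v∈V(G_j)} α^{(j)}(v) a(v) + Σ_{{u,v}∈E(G_j)} β^{(j)}({u,v}) a(u)a(v). Then every no-disturbance model on G with outcomes in {−1,+1} satisfies Σ_{v∈V} α(v) ⟨v⟩ + Σ_{{u,v}∈E(G)} β({u,v}) ⟨uv⟩ ≤ Σ_{j=1}^r ω_j. -/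
/-- The two-element set of outcomes `{−1, +1}` (as a subtype of `ℤ`). -/
abbrev Sgn : Type := ({-1, 1} : Finset ℤ)

instance : Nonempty Sgn := ⟨⟨1, by decide⟩⟩

/-- A *no-disturbance model* with outcomes in `{−1,+1}` on a finite simple graph `G`
assigns to each clique `C` of `G` a probability distribution `p C` on the functions
`C → {−1,+1}`, such that whenever `C ⊆ D` are cliques, `p C` is the marginal of
`p D`. -/
structure NDModel {V : Type*} [Fintype V] [DecidableEq V] (G : SimpleGraph V) where
  p : (C : Finset V) → (C → Sgn) → ℝ
  nonneg : ∀ C : Finset V, G.IsClique (C : Set V) → ∀ f : C → Sgn, 0 ≤ p C f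
  normalized : ∀ C : Finset V, G.IsClique (C : Set V) → ∑ f : C → Sgn, p C f = 1
  nodisturb : ∀ C D : Finset V, ∀ hCD : C ⊆ D, G.IsClique (D : Set V) →
    ∀ g : C → Sgn,
      p C g = ∑ f : D → Sgn, if (∀ x : C, f ⟨x.1, hCD x.2⟩ = g x) then p D f else 0

/-- The correlator `⟨uv⟩ = Σ_f f(u)f(v)·p_{{u,v}}(f)` of two (adjacent) vertices. -/
def NDModel.corr {V : Type*} [Fintype V] [DecidableEq V] {G : SimpleGraph V}
    (M : NDModel G) (u v : V) : ℝ :=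
  ∑ f : ({u, v} : Finset V) → Sgn,
    (((f ⟨u, by simp⟩ : ℤ) * (f ⟨v, by simp⟩ : ℤ) : ℤ) : ℝ) * M.p {u, v} f

/-- The single-vertex mean `⟨u⟩ = Σ_f f(u)·p_{{u}}(f)`. -/
def NDModel.mean {V : Type*} [Fintype V] [DecidableEq V] {G : SimpleGraph V}
    (M : NDModel G) (u : V) : ℝ :=
  ∑ f : ({u} : Finset V) → Sgn, ((f ⟨u, by simp⟩ : ℤ) : ℝ) * M.p {u} f

variable {V : Type*} [Fintype V] [DecidableEq V]

/-- The value `a(u)a(v)` of an assignment on an unordered pair `{u, v}`. -/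
def edgeTerm (a : V → Sgn) : Sym2 V → ℤ :=
  Sym2.lift ⟨fun u v => (a u : ℤ) * (a v : ℤ), fun u v => mul_comm _ _⟩

/-- The unordered pair `{u, v}` of the endpoints of an element of `Sym2 V`. -/
def pairFinset : Sym2 V → Finset V :=
  Sym2.lift ⟨fun u v => ({u, v} : Finset V), fun u v => Finset.pair_comm u v⟩

/-- The correlator `⟨uv⟩` of a no-disturbance model on the unordered pair `e`. -/
noncomputable def NDModel.corrE {G : SimpleGraph V} (M : NDModel G) (e : Sym2 V) : ℝ :=
  ∑ f : ↥(pairFinset e) → Sgn,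
    ((∏ x : ↥(pairFinset e), (f x : ℤ) : ℤ) : ℝ) * M.p (pairFinset e) f

section Hidden
set_option linter.unusedSectionVars false


variable {V : Type*} {G : SimpleGraph V}

/-- Relative chordality: every cycle with support inside `s` has a chord. -/
def RelChordal (G : SimpleGraph V) (s : Set V) : Prop :=
  ∀ (v : V) (c : G.Walk v v), (∀ x ∈ c.support, x ∈ s) → c.IsCycle → 4 ≤ c.length →
    ∃ u w : V, u ∈ c.support ∧ w ∈ c.support ∧ G.Adj u w ∧ ¬ c.toSubgraph.Adj u w

lemma RelChordal.mono {s t : Set V} (hts : t ⊆ s) (h : RelChordal G s) : RelChordal G t :=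
  fun v c hsupp => h v c (fun x hx => hts (hsupp x hx))

def liftWalk {s : Set V} : ∀ {u v : V} (p : G.Walk u v) (h : ∀ x ∈ p.support, x ∈ s),
    (G.induce s).Walk ⟨u, h u p.start_mem_support⟩ ⟨v, h v p.end_mem_support⟩
  | _, _, SimpleGraph.Walk.nil, _ => SimpleGraph.Walk.nil
  | _, _, SimpleGraph.Walk.cons ha q, h =>
      SimpleGraph.Walk.cons (by exact ha)
        (liftWalk q (fun x hx => h x (by simp [SimpleGraph.Walk.support_cons, hx])))

lemma liftWalk_map {s : Set V} : ∀ {u v : V} (p : G.Walk u v) (h : ∀ x ∈ p.support, x ∈ s),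
    (liftWalk p h).map (SimpleGraph.Embedding.induce s).toHom = p
  | _, _, SimpleGraph.Walk.nil, _ => rfl
  | _, _, SimpleGraph.Walk.cons ha q, h => by
      exact congrArg (SimpleGraph.Walk.cons ha) (liftWalk_map q _)

lemma relChordal_of_induce {s : Set V} (hc : (G.induce s).IsChordal) : RelChordal G s := by
  intro v c hsupp hcyc hlen
  set emb := SimpleGraph.Embedding.induce (G := G) s with hemb
  have hinj : Function.Injective emb.toHom := Subtype.val_injective
  set cc := liftWalk c hsupp with hl
  have hmap : cc.map emb.toHom = c := liftWalk_map c hsupp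
  have hcyc' : cc.IsCycle := by
    rw [← SimpleGraph.Walk.map_isCycle_iff_of_injective hinj, hmap]; exact hcyc
  have hlen' : 4 ≤ cc.length := by
    have := SimpleGraph.Walk.length_map cc (f := emb.toHom)
    rw [hmap] at this
    have h2 : c.length = cc.length := this
    omega
  obtain ⟨u', w', hu', hw', hadj', hnadj'⟩ := hc _ cc hcyc' hlen'
  refine ⟨u'.1, w'.1, ?_, ?_, hadj', ?_⟩
  · have h2 : c.support = cc.support.map emb.toHom := by
      have := SimpleGraph.Walk.support_map emb.toHom cc; rw [hmap] at this; exact this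
    rw [h2]; exact List.mem_map_of_mem hu'
  · have h2 : c.support = cc.support.map emb.toHom := by
      have := SimpleGraph.Walk.support_map emb.toHom cc; rw [hmap] at this; exact this
    rw [h2]; exact List.mem_map_of_mem hw'
  · intro hAdj
    have h3 : c.toSubgraph = cc.toSubgraph.map emb.toHom := by
      have := SimpleGraph.Walk.toSubgraph_map emb.toHom cc; rw [hmap] at this; exact this
    rw [h3] at hAdj
    obtain ⟨a, b, hab, ha, hb⟩ := hAdj
    have ha' : a = u' := Subtype.val_injective ha
    have hb' : b = w' := Subtype.val_injective hb
    exact hnadj' (ha' ▸ hb' ▸ hab)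

section Dirac
open SimpleGraph

variable [DecidableEq V]

/-- Reachability via walks staying inside `W`. -/
def RReach (G : SimpleGraph V) (W : Set V) (u v : V) : Prop :=
  ∃ p : G.Walk u v, ∀ x ∈ p.support, x ∈ W

lemma RReach.refl {W : Set V} {u : V} (hu : u ∈ W) : RReach G W u u :=
  ⟨SimpleGraph.Walk.nil, by simpa using hu⟩

lemma RReach.mem_left {W : Set V} {u v : V} (h : RReach G W u v) : u ∈ W := by
  obtain ⟨p, hp⟩ := h; exact hp u p.start_mem_support

lemma RReach.mem_right {W : Set V} {u v : V} (h : RReach G W u v) : v ∈ W := by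
  obtain ⟨p, hp⟩ := h; exact hp v p.end_mem_support

lemma RReach.symm {W : Set V} {u v : V} (h : RReach G W u v) : RReach G W v u := by
  obtain ⟨p, hp⟩ := h
  exact ⟨p.reverse, fun x hx => hp x (by simpa [SimpleGraph.Walk.support_reverse] using hx)⟩

lemma RReach.trans {W : Set V} {u v w : V} (h₁ : RReach G W u v) (h₂ : RReach G W v w) :
    RReach G W u w := by
  obtain ⟨p, hp⟩ := h₁; obtain ⟨q, hq⟩ := h₂
  refine ⟨p.append q, fun x hx => ?_⟩
  rcases (SimpleGraph.Walk.mem_support_append_iff _ _).mp hx with h | h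
  exacts [hp x h, hq x h]

lemma RReach.adj {W : Set V} {a u v : V} (h : RReach G W a u) (hv : v ∈ W) (huv : G.Adj u v) :
    RReach G W a v := by
  refine h.trans ⟨SimpleGraph.Walk.cons huv SimpleGraph.Walk.nil, fun x hx => ?_⟩
  simp only [SimpleGraph.Walk.support_cons, SimpleGraph.Walk.support_nil,
    List.mem_cons, List.mem_singleton] at hx
  rcases hx with rfl | hx
  · exact h.mem_right
  · rcases hx with rfl | h'
    · exact hv
    · exact absurd h' List.not_mem_nil

lemma rreach_of_support {W : Set V} {u v x : V} (p : G.Walk u v)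
    (hp : ∀ z ∈ p.support, z ∈ W) (hx : x ∈ p.support) : RReach G W u x :=
  ⟨p.takeUntil x hx, fun z hz => hp z (SimpleGraph.Walk.support_takeUntil_subset _ _ hz)⟩

lemma exists_adj_rreach {T S : Set V} {a b x : V} (p : G.Walk a b) (hx : x ∈ p.support)
    (hT : ∀ z ∈ p.support, z ∈ T) (hS : ∀ z ∈ p.support, z ≠ x → z ∉ S) (hax : a ≠ x) :
    ∃ y, G.Adj x y ∧ RReach G (T \ S) a y := by
  set q := p.takeUntil x hx with hqdef
  have hqsup : ∀ z ∈ q.support, z ∈ p.support :=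
    fun z hz => SimpleGraph.Walk.support_takeUntil_subset _ _ hz
  have hcount : q.support.count x = 1 := p.count_support_takeUntil_eq_one hx
  obtain ⟨y, hxy, r, hr⟩ := SimpleGraph.Walk.exists_eq_cons_of_ne hax.symm q.reverse
  have hxr : x ∉ r.support := by
    have h1 : q.reverse.support.count x = 1 := by
      rwa [SimpleGraph.Walk.support_reverse, List.count_reverse]
    rw [hr, SimpleGraph.Walk.support_cons, List.count_cons_self] at h1
    exact List.count_eq_zero.mp (by omega)
  have hrsub : ∀ z ∈ r.support, z ∈ q.support := by
    intro z hz
    have : z ∈ q.reverse.support := by rw [hr, SimpleGraph.Walk.support_cons]; exact List.mem_cons_of_mem _ hz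
    rwa [SimpleGraph.Walk.support_reverse, List.mem_reverse] at this
  refine ⟨y, hxy, r.reverse, fun z hz => ?_⟩
  rw [SimpleGraph.Walk.support_reverse, List.mem_reverse] at hz
  have hzq := hqsup z (hrsub z hz)
  exact ⟨hT z hzq, hS z hzq (fun h => hxr (h ▸ hz))⟩

lemma edge_mem_of_length_one {u v : V} (p : G.Walk u v) (h : p.length = 1) :
    s(u, v) ∈ p.edges := by
  cases p with
  | nil => simp at h
  | cons h' q =>
    cases q with
    | nil => simp
    | cons _ _ => simp [SimpleGraph.Walk.length_cons] at h

lemma ne_imp_length_ne_zero {u v : V} (p : G.Walk u v) (h : u ≠ v) : p.length ≠ 0 :=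
  fun h0 => h (SimpleGraph.Walk.exists_length_eq_zero_iff.mp ⟨p, h0⟩)

lemma exists_min_path {U : Set V} {x y : V}
    (hne : ∃ p : G.Walk x y, ∀ z ∈ p.support, z ∈ U) :
    ∃ p : G.Walk x y, (∀ z ∈ p.support, z ∈ U) ∧ p.IsPath ∧
      ∀ q : G.Walk x y, (∀ z ∈ q.support, z ∈ U) → p.length ≤ q.length := by
  classical
  have h : ∃ n, ∃ p : G.Walk x y, (∀ z ∈ p.support, z ∈ U) ∧ p.length = n := by
    obtain ⟨p, hp⟩ := hne; exact ⟨p.length, p, hp, rfl⟩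
  obtain ⟨p, hp, hplen⟩ := Nat.find_spec h
  have hmin : ∀ q : G.Walk x y, (∀ z ∈ q.support, z ∈ U) → Nat.find h ≤ q.length :=
    fun q hq => Nat.find_min' h ⟨q, hq, rfl⟩
  refine ⟨p.bypass, fun z hz => hp z (SimpleGraph.Walk.support_bypass_subset _ hz),
    SimpleGraph.Walk.bypass_isPath p, fun q hq => ?_⟩
  calc p.bypass.length ≤ p.length := SimpleGraph.Walk.length_bypass_le p
    _ = Nat.find h := hplen
    _ ≤ q.length := hmin q hq

lemma no_shortcut {U : Set V} {x y u w : V} (P : G.Walk x y)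
    (hQ : ∀ z ∈ P.support, z ∈ U)
    (hmin : ∀ q : G.Walk x y, (∀ z ∈ q.support, z ∈ U) → P.length ≤ q.length)
    (hu : u ∈ P.support) (hw : w ∈ P.support) (hadj : G.Adj u w)
    (hne : s(u, w) ∉ P.edges) : False := by
  have hspec := P.take_spec hw
  have hPlen : (P.takeUntil w hw).length + (P.dropUntil w hw).length = P.length := by
    have := congrArg SimpleGraph.Walk.length hspec
    rwa [SimpleGraph.Walk.length_append] at this
  by_cases h1 : u ∈ (P.takeUntil w hw).support
  · set P1 := P.takeUntil w hw with hP1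
    set P2 := P.dropUntil w hw with hP2
    set T := P1.takeUntil u h1 with hT
    set D := P1.dropUntil u h1 with hD
    have hTD : T.length + D.length = P1.length := by
      have := congrArg SimpleGraph.Walk.length (P1.take_spec h1)
      rwa [SimpleGraph.Walk.length_append] at this
    have hD0 : D.length ≠ 0 := ne_imp_length_ne_zero D hadj.ne
    have hD1 : D.length ≠ 1 := by
      intro h1'
      exact hne (SimpleGraph.Walk.edges_takeUntil_subset _ _
        (SimpleGraph.Walk.edges_dropUntil_subset _ _ (edge_mem_of_length_one D h1')))
    have hq : ∀ z ∈ (T.append (SimpleGraph.Walk.cons hadj P2)).support, z ∈ U := by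
      intro z hz
      rcases (SimpleGraph.Walk.mem_support_append_iff _ _).mp hz with h | h
      · exact hQ z (SimpleGraph.Walk.support_takeUntil_subset _ _
          (SimpleGraph.Walk.support_takeUntil_subset _ _ h))
      · rw [SimpleGraph.Walk.support_cons] at h
        rcases List.mem_cons.mp h with rfl | h
        · exact hQ z hu
        · exact hQ z (SimpleGraph.Walk.support_dropUntil_subset _ _ h)
    have := hmin _ hq
    rw [SimpleGraph.Walk.length_append, SimpleGraph.Walk.length_cons] at this
    omega
  · have hu2 : u ∈ (P.dropUntil w hw).support := by
      have : u ∈ (P.takeUntil w hw).support ∨ u ∈ (P.dropUntil w hw).support := by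
        rw [← SimpleGraph.Walk.mem_support_append_iff, hspec]; exact hu
      tauto
    set P1 := P.takeUntil w hw with hP1
    set P2 := P.dropUntil w hw with hP2
    set T := P2.takeUntil u hu2 with hT
    set D := P2.dropUntil u hu2 with hD
    have hTD : T.length + D.length = P2.length := by
      have := congrArg SimpleGraph.Walk.length (P2.take_spec hu2)
      rwa [SimpleGraph.Walk.length_append] at this
    have hT0 : T.length ≠ 0 := ne_imp_length_ne_zero T hadj.ne.symm
    have hT1 : T.length ≠ 1 := by
      intro h1'
      apply hne
      have : s(w, u) ∈ P2.edges :=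
        SimpleGraph.Walk.edges_takeUntil_subset _ _ (edge_mem_of_length_one T h1')
      rw [Sym2.eq_swap] at this
      exact SimpleGraph.Walk.edges_dropUntil_subset _ _ this
    have hq : ∀ z ∈ (P1.append (SimpleGraph.Walk.cons hadj.symm D)).support, z ∈ U := by
      intro z hz
      rcases (SimpleGraph.Walk.mem_support_append_iff _ _).mp hz with h | h
      · exact hQ z (SimpleGraph.Walk.support_takeUntil_subset _ _ h)
      · rw [SimpleGraph.Walk.support_cons] at h
        rcases List.mem_cons.mp h with rfl | h
        · exact hQ z hw
        · exact hQ z (SimpleGraph.Walk.support_dropUntil_subset _ _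
            (SimpleGraph.Walk.support_dropUntil_subset _ _ h))
    have := hmin _ hq
    rw [SimpleGraph.Walk.length_append, SimpleGraph.Walk.length_cons] at this
    omega

end Dirac

section Dirac2
open SimpleGraph
variable [DecidableEq V]

/-- `v` is a simplicial vertex of (the graph induced by `G` on) `s`. -/
def SimpVert (G : SimpleGraph V) (s : Finset V) (v : V) : Prop :=
  G.IsClique {u : V | u ∈ s ∧ G.Adj v u}

theorem dirac_pair (G : SimpleGraph V) : ∀ s : Finset V, RelChordal G ↑s →
    ∀ a ∈ s, ∀ b ∈ s, a ≠ b → ¬G.Adj a b →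
      ∃ v ∈ s, ∃ w ∈ s, v ≠ w ∧ ¬G.Adj v w ∧ SimpVert G s v ∧ SimpVert G s w := by
  intro s
  induction s using Finset.strongInduction with
  | _ s IH =>
  intro hch a ha b hb hab hnadj
  classical
  set Sep : Finset V → Prop := fun S => S ⊆ s ∧ a ∉ S ∧ b ∉ S ∧ ¬ RReach G (↑s \ ↑S) a b
    with hSepdef
  have hSep0 : Sep ((s.erase a).erase b) := by
    refine ⟨(Finset.erase_subset _ _).trans (Finset.erase_subset _ _), ?_, ?_, ?_⟩
    · simp [Finset.mem_erase]
    · simp [Finset.mem_erase]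
    · rintro ⟨p, hp⟩
      obtain ⟨c, hac, r, hr⟩ := SimpleGraph.Walk.exists_eq_cons_of_ne hab p
      have hcsup : c ∈ p.support := by
        rw [hr, SimpleGraph.Walk.support_cons]
        exact List.mem_cons_of_mem _ r.start_mem_support
      obtain ⟨hcs, hcE⟩ := hp c hcsup
      have hc : c = a ∨ c = b := by
        by_contra hcc
        push_neg at hcc
        exact hcE (by simp only [Finset.coe_erase, Set.mem_diff, Set.mem_singleton_iff,
          Finset.coe_erase] at *; exact ⟨⟨hcs, hcc.1⟩, hcc.2⟩)
      rcases hc with rfl | rfl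
      · exact hac.ne rfl
      · exact hnadj hac
  have hSne : (s.powerset.filter Sep).Nonempty :=
    ⟨_, Finset.mem_filter.mpr ⟨Finset.mem_powerset.mpr hSep0.1, hSep0⟩⟩
  obtain ⟨S, hSmem, hSmin⟩ := Finset.exists_min_image _ Finset.card hSne
  obtain ⟨hSs, haS, hbS, hSreach⟩ : Sep S := (Finset.mem_filter.mp hSmem).2
  set cmp : V → Finset V := fun c => s.filter (fun z => RReach G (↑s \ ↑S) c z) with hcmpdef
  have hmem_cmp : ∀ c z, z ∈ cmp c ↔ RReach G (↑s \ ↑S) c z := by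
    intro c z
    simp only [hcmpdef, Finset.mem_filter, and_iff_right_iff_imp]
    exact fun h => (Set.mem_diff _).mp h.mem_right |>.1 |> Finset.mem_coe.mp
  have hcmp_sub : ∀ c z, z ∈ cmp c → z ∈ (↑s \ ↑S : Set V) :=
    fun c z hz => ((hmem_cmp c z).mp hz).mem_right
  have hdisjAB : ∀ z, z ∈ cmp a → z ∈ cmp b → False := by
    intro z h1 h2
    exact hSreach (((hmem_cmp a z).mp h1).trans ((hmem_cmp b z).mp h2).symm)
  -- each minimal separator vertex has neighbours in both components
  have hnbr : ∀ x ∈ S, (∃ u ∈ cmp a, G.Adj x u) ∧ (∃ u ∈ cmp b, G.Adj x u) := by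
    intro x hxS
    have hErase : ¬ Sep (S.erase x) := by
      intro hS'
      have h1 := hSmin _ (Finset.mem_filter.mpr ⟨Finset.mem_powerset.mpr hS'.1, hS'⟩)
      have h2 := Finset.card_erase_lt_of_mem hxS
      omega
    have hreach' : ∃ p : G.Walk a b, ∀ z ∈ p.support, z ∈ (↑s \ ↑(S.erase x) : Set V) := by
      by_contra hno
      push_neg at hno
      refine hErase ⟨(Finset.erase_subset _ _).trans hSs,
        fun h => haS (Finset.mem_of_mem_erase h),
        fun h => hbS (Finset.mem_of_mem_erase h), ?_⟩
      rintro ⟨p, hp⟩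
      obtain ⟨z, hz1, hz2⟩ := hno p
      exact hz2 (hp z hz1)
    obtain ⟨p, hp⟩ := hreach'
    have hxp : x ∈ p.support := by
      by_contra hxp
      refine hSreach ⟨p, fun z hz => ?_⟩
      obtain ⟨hzs, hzE⟩ := hp z hz
      exact ⟨hzs, fun hzS => hzE (by
        simp only [Finset.coe_erase, Set.mem_diff, Set.mem_singleton_iff]
        exact ⟨hzS, fun h => hxp (h ▸ hz)⟩)⟩
    have hT : ∀ z ∈ p.support, z ∈ (↑s : Set V) := fun z hz => (hp z hz).1
    have hS2 : ∀ z ∈ p.support, z ≠ x → z ∉ (↑S : Set V) := by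
      intro z hz hzx hzS
      exact (hp z hz).2 (by
        simp only [Finset.coe_erase, Set.mem_diff, Set.mem_singleton_iff]
        exact ⟨hzS, hzx⟩)
    constructor
    · obtain ⟨y, hxy, hy⟩ := exists_adj_rreach p hxp hT hS2 (fun h => haS (h ▸ hxS))
      exact ⟨y, (hmem_cmp a y).mpr hy, hxy⟩
    · have hxp' : x ∈ p.reverse.support := by
        rwa [SimpleGraph.Walk.support_reverse, List.mem_reverse]
      have hT' : ∀ z ∈ p.reverse.support, z ∈ (↑s : Set V) := by
        intro z hz
        rw [SimpleGraph.Walk.support_reverse, List.mem_reverse] at hz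
        exact hT z hz
      have hS2' : ∀ z ∈ p.reverse.support, z ≠ x → z ∉ (↑S : Set V) := by
        intro z hz
        rw [SimpleGraph.Walk.support_reverse, List.mem_reverse] at hz
        exact hS2 z hz
      obtain ⟨y, hxy, hy⟩ := exists_adj_rreach p.reverse hxp' hT' hS2' (fun h => hbS (h ▸ hxS))
      exact ⟨y, (hmem_cmp b y).mpr hy, hxy⟩
  -- the minimal separator is a clique
  have hSclq : G.IsClique (↑S : Set V) := by
    intro x hxS' y hyS' hxy
    by_contra hnadjxy
    have hxS : x ∈ S := hxS'
    have hyS : y ∈ S := hyS'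
    obtain ⟨⟨u, huA, hxu⟩, ⟨v, hvB, hxv⟩⟩ := hnbr x hxS
    obtain ⟨⟨u', huA', hyu'⟩, ⟨v', hvB', hyv'⟩⟩ := hnbr y hyS
    -- a minimal path from x to y through `cmp a`
    have hPex : ∃ p : G.Walk x y, ∀ z ∈ p.support, z ∈ (↑(cmp a) : Set V) ∪ {x, y} := by
      obtain ⟨p₀, hp₀⟩ := ((hmem_cmp a u).mp huA).symm.trans ((hmem_cmp a u').mp huA')
      have hp₀A : ∀ z ∈ p₀.support, z ∈ cmp a := fun z hz =>
        (hmem_cmp a z).mpr (((hmem_cmp a u).mp huA).trans (rreach_of_support p₀ hp₀ hz))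
      refine ⟨SimpleGraph.Walk.cons hxu (p₀.concat hyu'.symm), fun z hz => ?_⟩
      rw [SimpleGraph.Walk.support_cons] at hz
      rcases List.mem_cons.mp hz with rfl | hz
      · right; left; rfl
      · rw [SimpleGraph.Walk.support_concat, List.mem_append,
          List.mem_singleton] at hz
        rcases hz with hz | rfl
        · exact Or.inl (hp₀A z hz)
        · right; right; rfl
    have hQex : ∃ p : G.Walk y x, ∀ z ∈ p.support, z ∈ (↑(cmp b) : Set V) ∪ {x, y} := by
      obtain ⟨p₀, hp₀⟩ := ((hmem_cmp b v').mp hvB').symm.trans ((hmem_cmp b v).mp hvB)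
      have hp₀B : ∀ z ∈ p₀.support, z ∈ cmp b := fun z hz =>
        (hmem_cmp b z).mpr (((hmem_cmp b v').mp hvB').trans (rreach_of_support p₀ hp₀ hz))
      refine ⟨SimpleGraph.Walk.cons hyv' (p₀.concat hxv.symm), fun z hz => ?_⟩
      rw [SimpleGraph.Walk.support_cons] at hz
      rcases List.mem_cons.mp hz with rfl | hz
      · right; right; rfl
      · rw [SimpleGraph.Walk.support_concat, List.mem_append,
          List.mem_singleton] at hz
        rcases hz with hz | rfl
        · exact Or.inl (hp₀B z hz)
        · right; left; rfl
    obtain ⟨P, hPU, hPpath, hPmin⟩ := exists_min_path hPex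
    obtain ⟨Q, hQU, hQpath, hQmin⟩ := exists_min_path hQex
    have hlen2 : ∀ {c d : V} (p : G.Walk c d), c ≠ d → ¬ G.Adj c d → 2 ≤ p.length := by
      intro c d p hcd hbad
      by_contra hlt
      push_neg at hlt
      interval_cases h : p.length
      · exact hcd (SimpleGraph.Walk.exists_length_eq_zero_iff.mp ⟨p, h⟩)
      · exact hbad (p.adj_of_mem_edges (edge_mem_of_length_one p h))
    have hP2 : 2 ≤ P.length := hlen2 P hxy hnadjxy
    have hQ2 : 2 ≤ Q.length := hlen2 Q (Ne.symm hxy) (fun h => hnadjxy h.symm)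
    -- membership facts
    have hnotS : ∀ c z, z ∈ cmp c → z ∉ (↑S : Set V) := fun c z hz => ((hcmp_sub c z hz).2)
    have hxA : x ∉ (↑(cmp a) : Set V) := fun h => hnotS a x h hxS'
    have hyA : y ∉ (↑(cmp a) : Set V) := fun h => hnotS a y h hyS'
    have hxB : x ∉ (↑(cmp b) : Set V) := fun h => hnotS b x h hxS'
    have hyB : y ∉ (↑(cmp b) : Set V) := fun h => hnotS b y h hyS'
    have hPQsup : ∀ z, z ∈ P.support → z ∈ Q.support → z = x ∨ z = y := by
      intro z h1 h2
      rcases hPU z h1 with hA | h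
      · rcases hQU z h2 with hB | h'
        · exact absurd hB (fun hB => hdisjAB z hA hB)
        · rcases h' with h' | h'
          exacts [Or.inl h', Or.inr h']
      · rcases h with h | h
        exacts [Or.inl h, Or.inr h]
    set c : G.Walk x x := P.append Q with hcdef
    have hctail : c.support.tail = P.support.tail ++ Q.support.tail := by
      rw [hcdef, SimpleGraph.Walk.support_append]
      rw [P.support_eq_cons]
      rfl
    have hxnotPtail : x ∉ P.support.tail := by
      have h := hPpath.support_nodup
      rw [P.support_eq_cons] at h
      exact (List.nodup_cons.mp h).1
    have hynotQtail : y ∉ Q.support.tail := by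
      have h := hQpath.support_nodup
      rw [Q.support_eq_cons] at h
      exact (List.nodup_cons.mp h).1
    have hclen : 4 ≤ c.length := by
      rw [hcdef, SimpleGraph.Walk.length_append]; omega
    have hcyc : c.IsCycle := by
      refine ⟨⟨⟨?_⟩, ?_⟩, ?_⟩
      · rw [hcdef, SimpleGraph.Walk.edges_append]
        refine List.Nodup.append hPpath.isTrail.edges_nodup hQpath.isTrail.edges_nodup ?_
        intro e heP heQ
        induction e using Sym2.ind with
        | _ c1 c2 =>
          have hadj12 : G.Adj c1 c2 := P.adj_of_mem_edges heP
          have h1P := P.fst_mem_support_of_mem_edges heP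
          have h2P := P.snd_mem_support_of_mem_edges heP
          have h1Q := Q.fst_mem_support_of_mem_edges heQ
          have h2Q := Q.snd_mem_support_of_mem_edges heQ
          rcases hPQsup c1 h1P h1Q with rfl | rfl <;>
            rcases hPQsup c2 h2P h2Q with rfl | rfl
          · exact hadj12.ne rfl
          · exact hnadjxy hadj12
          · exact hnadjxy hadj12.symm
          · exact hadj12.ne rfl
      · intro hnil
        have h0 : c.length = 0 := by rw [hnil]; rfl
        omega
      · rw [hctail]
        refine List.Nodup.append ?_ ?_ ?_
        · have h := hPpath.support_nodup
          rw [P.support_eq_cons] at h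
          exact (List.nodup_cons.mp h).2
        · have h := hQpath.support_nodup
          rw [Q.support_eq_cons] at h
          exact (List.nodup_cons.mp h).2
        · intro z h1 h2
          have hz1 : z ∈ P.support := by
            rw [P.support_eq_cons]; exact List.mem_cons_of_mem _ h1
          have hz2 : z ∈ Q.support := by
            rw [Q.support_eq_cons]; exact List.mem_cons_of_mem _ h2
          rcases hPQsup z hz1 hz2 with rfl | rfl
          · exact hxnotPtail h1
          · exact hynotQtail h2
    have hcs : ∀ z ∈ c.support, z ∈ (↑s : Set V) := by
      intro z hz
      rcases (SimpleGraph.Walk.mem_support_append_iff _ _).mp hz with h | h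
      · rcases hPU z h with h' | h'
        · exact (hcmp_sub a z h').1
        · rcases h' with rfl | rfl
          exacts [hSs hxS, hSs hyS]
      · rcases hQU z h with h' | h'
        · exact (hcmp_sub b z h').1
        · rcases h' with rfl | rfl
          exacts [hSs hxS, hSs hyS]
    obtain ⟨u₁, w₁, hu₁, hw₁, hadj₁, hnadj₁⟩ := hch x c hcs hcyc hclen
    have hedge : s(u₁, w₁) ∉ P.edges ∧ s(u₁, w₁) ∉ Q.edges := by
      constructor <;> intro he <;> apply hnadj₁ <;>
        refine (SimpleGraph.Subgraph.mem_edgeSet).mp ((c.mem_edges_toSubgraph).mpr ?_) <;>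
        rw [hcdef, SimpleGraph.Walk.edges_append]
      · exact List.mem_append_left _ he
      · exact List.mem_append_right _ he
    have hmixed : ∀ z₁ z₂, z₁ ∈ (↑(cmp a) : Set V) → z₂ ∈ (↑(cmp b) : Set V) →
        G.Adj z₁ z₂ → False := by
      intro z₁ z₂ h1 h2 hadj
      exact hdisjAB z₂ ((hmem_cmp a z₂).mpr (((hmem_cmp a z₁).mp h1).adj (hcmp_sub b z₂ h2) hadj)) h2
    have hcsupport : ∀ z ∈ c.support, z ∈ P.support ∨ z ∈ Q.support := fun z hz =>
      (SimpleGraph.Walk.mem_support_append_iff _ _).mp (hcdef ▸ hz)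
    have hxQ : x ∈ Q.support := Q.end_mem_support
    have hyQ : y ∈ Q.support := Q.start_mem_support
    have hxP : x ∈ P.support := P.start_mem_support
    have hyP : y ∈ P.support := P.end_mem_support
    by_cases huP : u₁ ∈ P.support <;> by_cases hwP : w₁ ∈ P.support
    · exact no_shortcut P hPU hPmin huP hwP hadj₁ hedge.1
    · have hwQ : w₁ ∈ Q.support := (hcsupport w₁ hw₁).resolve_left hwP
      by_cases huQ : u₁ ∈ Q.support
      · exact no_shortcut Q hQU hQmin huQ hwQ hadj₁ hedge.2
      · have huA : u₁ ∈ (↑(cmp a) : Set V) := by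
          rcases hPU u₁ huP with h | h
          · exact h
          · rcases h with rfl | rfl
            exacts [absurd hxQ huQ, absurd hyQ huQ]
        have hwB : w₁ ∈ (↑(cmp b) : Set V) := by
          rcases hQU w₁ hwQ with h | h
          · exact h
          · rcases h with rfl | rfl
            exacts [absurd hxP hwP, absurd hyP hwP]
        exact hmixed u₁ w₁ huA hwB hadj₁
    · have huQ : u₁ ∈ Q.support := (hcsupport u₁ hu₁).resolve_left huP
      have hwQ : ¬ w₁ ∈ Q.support := by
        intro hwQ
        exact no_shortcut Q hQU hQmin huQ hwQ hadj₁ hedge.2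
      have hwA : w₁ ∈ (↑(cmp a) : Set V) := by
        rcases hPU w₁ hwP with h | h
        · exact h
        · rcases h with rfl | rfl
          exacts [absurd hxQ hwQ, absurd hyQ hwQ]
      have huB : u₁ ∈ (↑(cmp b) : Set V) := by
        rcases hQU u₁ huQ with h | h
        · exact h
        · rcases h with rfl | rfl
          exacts [absurd hxP huP, absurd hyP huP]
      exact hmixed w₁ u₁ hwA huB hadj₁.symm
    · have huQ : u₁ ∈ Q.support := (hcsupport u₁ hu₁).resolve_left huP
      have hwQ : w₁ ∈ Q.support := (hcsupport w₁ hw₁).resolve_left hwP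
      exact no_shortcut Q hQU hQmin huQ hwQ hadj₁ hedge.2
  -- from a component, extract a simplicial vertex of `s` inside that component
  have comp : ∀ c d : V, c ∈ s → d ∈ s → c ∉ S → d ∉ S →
      ¬ RReach G (↑s \ ↑S) c d →
      ∃ v ∈ cmp c, SimpVert G s v := by
    intro c d hcs hds hcS hdS hreach
    set s₁ : Finset V := cmp c ∪ S with hs₁
    have hsub : s₁ ⊆ s := Finset.union_subset (Finset.filter_subset _ _) hSs
    have hc₁ : c ∈ cmp c := (hmem_cmp c c).mpr (RReach.refl ⟨hcs, hcS⟩)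
    have hd₁ : d ∉ s₁ := by
      intro h
      rcases Finset.mem_union.mp h with h | h
      · exact hreach ((hmem_cmp c d).mp h)
      · exact hdS h
    have hssub : s₁ ⊂ s := ⟨hsub, fun h => hd₁ (h hds)⟩
    have hclosure : ∀ v ∈ cmp c, ∀ u ∈ s, G.Adj v u → u ∈ s₁ := by
      intro v hv u hu hadj
      by_cases huS : u ∈ S
      · exact Finset.mem_union_right _ huS
      · exact Finset.mem_union_left _ ((hmem_cmp c u).mpr
          (((hmem_cmp c v).mp hv).adj ⟨hu, huS⟩ hadj))
    have htransfer : ∀ z ∈ s₁, z ∉ S → SimpVert G s₁ z → ∃ v ∈ cmp c, SimpVert G s v := by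
      intro z hz hzS hzsimp
      have hzA : z ∈ cmp c := by
        rcases Finset.mem_union.mp hz with h | h
        · exact h
        · exact absurd h hzS
      refine ⟨z, hzA, ?_⟩
      have hsets : {u : V | u ∈ s ∧ G.Adj z u} = {u : V | u ∈ s₁ ∧ G.Adj z u} := by
        ext u
        constructor
        · rintro ⟨h1, h2⟩; exact ⟨hclosure z hzA u h1 h2, h2⟩
        · rintro ⟨h1, h2⟩; exact ⟨hsub h1, h2⟩
      rw [SimpVert, hsets]
      exact hzsimp
    by_cases hclq : G.IsClique (↑s₁ : Set V)
    · refine ⟨c, hc₁, ?_⟩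
      refine hclq.subset ?_
      rintro u ⟨h1, h2⟩
      exact_mod_cast hclosure c hc₁ u h1 h2
    · rw [SimpleGraph.isClique_iff] at hclq
      have hpair : ∃ a' ∈ s₁, ∃ b' ∈ s₁, a' ≠ b' ∧ ¬ G.Adj a' b' := by
        by_contra hno
        push_neg at hno
        exact hclq fun p hp q hq hpq => hno p hp q hq hpq
      obtain ⟨a', ha', b', hb', hab', hnadj'⟩ := hpair
      obtain ⟨v₁, hv₁, w₁, hw₁, hvw, hnvw, hsv, hsw⟩ :=
        IH s₁ hssub (hch.mono (by exact_mod_cast hsub)) a' ha' b' hb' hab' hnadj'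
      have hvworS : v₁ ∉ S ∨ w₁ ∉ S := by
        by_contra hboth
        push_neg at hboth
        exact hnvw (hSclq hboth.1 hboth.2 hvw)
      rcases hvworS with h | h
      · exact htransfer v₁ hv₁ h hsv
      · exact htransfer w₁ hw₁ h hsw
  obtain ⟨vA, hvA, hsA⟩ := comp a b ha hb haS hbS hSreach
  obtain ⟨vB, hvB, hsB⟩ := comp b a hb ha hbS haS (fun h => hSreach h.symm)
  have hvAs : vA ∈ s := (hcmp_sub a vA hvA).1
  have hvBs : vB ∈ s := (hcmp_sub b vB hvB).1
  refine ⟨vA, hvAs, vB, hvBs, ?_, ?_, hsA, hsB⟩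
  · intro h
    exact hdisjAB vA hvA (h ▸ hvB)
  · intro hadj
    exact hdisjAB vB ((hmem_cmp a vB).mpr (((hmem_cmp a vA).mp hvA).adj (hcmp_sub b vB hvB) hadj)) hvB

theorem exists_simp (G : SimpleGraph V) (s : Finset V) (hch : RelChordal G ↑s)
    (hne : s.Nonempty) : ∃ v ∈ s, SimpVert G s v := by
  classical
  by_cases hclq : G.IsClique (↑s : Set V)
  · obtain ⟨v, hv⟩ := hne
    refine ⟨v, hv, hclq.subset ?_⟩
    rintro u ⟨h1, h2⟩
    exact_mod_cast h1
  · rw [SimpleGraph.isClique_iff] at hclq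
    have hpair : ∃ a' ∈ s, ∃ b' ∈ s, a' ≠ b' ∧ ¬ G.Adj a' b' := by
      by_contra hno
      push_neg at hno
      exact hclq fun p hp q hq hpq => hno p (by exact_mod_cast hp) q (by exact_mod_cast hq) hpq
    obtain ⟨a', ha', b', hb', hab', hnadj'⟩ := hpair
    obtain ⟨v, hv, -, -, -, -, hsv, -⟩ := dirac_pair G s hch a' ha' b' hb' hab' hnadj'
    exact ⟨v, hv, hsv⟩
end Dirac2

section Prob
open Finset

variable [Fintype V] [DecidableEq V] {G : SimpleGraph V}

/-- Restriction of a partial assignment. -/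
def restr {C D : Finset V} (h : C ⊆ D) (f : D → Sgn) (x : C) : Sgn := f ⟨x.1, h x.2⟩

lemma restr_restr {C D E : Finset V} (h1 : C ⊆ D) (h2 : D ⊆ E) (f : E → Sgn) :
    restr h1 (restr h2 f) = restr (h1.trans h2) f := rfl

lemma nodisturb' (M : NDModel G) {C D : Finset V} (hCD : C ⊆ D)
    (hD : G.IsClique (D : Set V)) (g : C → Sgn) :
    M.p C g = ∑ f : D → Sgn, if restr hCD f = g then M.p D f else 0 := by
  rw [M.nodisturb C D hCD hD g]
  refine Finset.sum_congr rfl fun f _ => if_congr ?_ rfl rfl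
  exact ⟨fun h => funext h, fun h x => congrFun h x⟩

/-- Splitting an assignment on `insert v T` into its restriction to `T` and its value at `v`. -/
def insertEquiv (v : V) (T : Finset V) (hvT : v ∉ T) :
    (↥(insert v T) → Sgn) ≃ ((T → Sgn) × Sgn) where
  toFun f := (restr (Finset.subset_insert v T) f, f ⟨v, Finset.mem_insert_self v T⟩)
  invFun p x := if h : (x : V) = v then p.2
    else p.1 ⟨x.1, (Finset.mem_insert.mp x.2).resolve_left h⟩
  left_inv f := by
    funext x
    obtain ⟨x, hx⟩ := x
    by_cases h : x = v
    · subst h; simp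
    · simp [h, restr]
  right_inv p := by
    refine Prod.ext (funext fun x => ?_) (by simp)
    obtain ⟨x, hx⟩ := x
    have hxv : x ≠ v := fun h => hvT (h ▸ hx)
    simp [restr, hxv]

lemma insertEquiv_symm_restr {v : V} {T C : Finset V} (hvT : v ∉ T)
    (hCT : C ⊆ T) (hC : C ⊆ insert v T) (f' : T → Sgn) (sg : Sgn) :
    restr hC ((insertEquiv v T hvT).symm (f', sg)) = restr hCT f' := by
  funext x
  obtain ⟨x, hx⟩ := x
  have hxv : x ≠ v := fun h => hvT (h ▸ hCT hx)
  simp [insertEquiv, restr, hxv]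

lemma insertEquiv_symm_apply_v {v : V} {T : Finset V} (hvT : v ∉ T)
    (f' : T → Sgn) (sg : Sgn) :
    (insertEquiv v T hvT).symm (f', sg) ⟨v, Finset.mem_insert_self v T⟩ = sg := by
  simp [insertEquiv]

/-- Splitting a sum over assignments on `insert v T`. -/
lemma sum_insert_split {v : V} {T : Finset V} (hvT : v ∉ T)
    (F : (↥(insert v T) → Sgn) → ℝ) :
    ∑ f : ↥(insert v T) → Sgn, F f
      = ∑ f' : T → Sgn, ∑ sg : Sgn, F ((insertEquiv v T hvT).symm (f', sg)) := by
  rw [← Equiv.sum_comp (insertEquiv v T hvT).symm F, Fintype.sum_prod_type]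

end Prob

section Vorobev
open Finset
variable [Fintype V] [DecidableEq V] {G : SimpleGraph V}

lemma vorobev_step (M : NDModel G) (v : V) (T Nv : Finset V) (hvT : v ∉ T)
    (hNvT : Nv ⊆ T) (hvNv : v ∉ Nv)
    (hNclq : G.IsClique (↑(insert v Nv) : Set V))
    (hNvfull : ∀ u ∈ T, G.Adj v u → u ∈ Nv)
    (q' : (T → Sgn) → ℝ) (hq'0 : ∀ f, 0 ≤ q' f)
    (hq' : ∀ (C : Finset V) (hC : C ⊆ T), G.IsClique (C : Set V) →
      ∀ g : C → Sgn, M.p C g = ∑ f : T → Sgn, if restr hC f = g then q' f else 0) :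
    ∃ q : (↥(insert v T) → Sgn) → ℝ, (∀ f, 0 ≤ q f) ∧
      ∀ (C : Finset V) (hC : C ⊆ insert v T), G.IsClique (C : Set V) →
        ∀ g : C → Sgn, M.p C g
          = ∑ f : ↥(insert v T) → Sgn, if restr hC f = g then q f else 0 := by
  classical
  set N := insert v Nv with hNdef
  have rT : T ⊆ insert v T := Finset.subset_insert v T
  have rN : N ⊆ insert v T := Finset.insert_subset_insert v hNvT
  have rNvN : Nv ⊆ N := Finset.subset_insert v Nv
  have rNvT : Nv ⊆ T := hNvT
  have rNvW : Nv ⊆ insert v T := rNvT.trans rT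
  have hNvclq : G.IsClique (↑Nv : Set V) := hNclq.subset (by exact_mod_cast rNvN)
  have hvN : v ∈ N := Finset.mem_insert_self v Nv
  set ext : (T → Sgn) → Sgn → (↥(insert v T) → Sgn) :=
    fun f' sg => (insertEquiv v T hvT).symm (f', sg) with hextdef
  set extN : (Nv → Sgn) → Sgn → (N → Sgn) :=
    fun h' sg => (insertEquiv v Nv hvNv).symm (h', sg) with hextNdef
  have ite_nonneg : ∀ {β : Type} [Fintype β] (F : β → ℝ) (P : β → Prop)
      [DecidablePred P], (∀ b, 0 ≤ F b) → ∀ b, (0:ℝ) ≤ if P b then F b else 0 := by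
    intro β _ F P _ hF b
    split
    · exact hF b
    · exact le_refl 0
  have F3 : ∀ f' : T → Sgn, M.p Nv (restr rNvT f') = 0 → q' f' = 0 := by
    intro f' h0
    have hsum := (hq' Nv rNvT hNvclq (restr rNvT f')).symm
    rw [h0] at hsum
    have hall := (Finset.sum_eq_zero_iff_of_nonneg (fun f _ => by
      split
      · exact hq'0 f
      · exact le_refl 0)).mp hsum
    have := hall f' (Finset.mem_univ f')
    rwa [if_pos rfl] at this
  have F4 : ∀ gN : N → Sgn, M.p Nv (restr rNvN gN) = 0 → M.p N gN = 0 := by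
    intro gN h0
    have hsum := (nodisturb' M rNvN hNclq (restr rNvN gN)).symm
    rw [h0] at hsum
    have hall := (Finset.sum_eq_zero_iff_of_nonneg (fun f _ => by
      split
      · exact M.nonneg N hNclq f
      · exact le_refl 0)).mp hsum
    have := hall gN (Finset.mem_univ gN)
    rwa [if_pos rfl] at this
  have E3 : ∀ (C : Finset V) (hCT : C ⊆ T) (hC : C ⊆ insert v T) (f' : T → Sgn) (sg : Sgn),
      restr hC (ext f' sg) = restr hCT f' :=
    fun C hCT hC f' sg => insertEquiv_symm_restr hvT hCT hC f' sg
  have E1 : ∀ (f' : T → Sgn) (sg : Sgn), restr rT (ext f' sg) = f' :=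
    fun f' sg => (E3 T (Finset.Subset.refl T) rT f' sg).trans rfl
  have E5 : ∀ (f' : T → Sgn) (sg : Sgn), restr rN (ext f' sg) = extN (restr rNvT f') sg := by
    intro f' sg
    funext x
    obtain ⟨x, hx⟩ := x
    by_cases hxv : x = v
    · subst hxv
      simp [hextdef, hextNdef, insertEquiv, restr]
    · have hxNv : x ∈ Nv := (Finset.mem_insert.mp hx).resolve_left hxv
      simp [hextdef, hextNdef, insertEquiv, restr, hxv]
  have E1N : ∀ (h' : Nv → Sgn) (sg : Sgn), restr rNvN (extN h' sg) = h' :=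
    fun h' sg => (insertEquiv_symm_restr hvNv (Finset.Subset.refl Nv) rNvN h' sg).trans rfl
  -- Claim B
  have claimB : ∀ h : Nv → Sgn, ∑ sg : Sgn, M.p N (extN h sg) = M.p Nv h := by
    intro h
    have h1 := nodisturb' M rNvN hNclq h
    rw [sum_insert_split hvNv (fun fN => if restr rNvN fN = h then M.p N fN else 0)] at h1
    have h2 : ∀ h' : Nv → Sgn,
        (∑ sg : Sgn, if restr rNvN (extN h' sg) = h then M.p N (extN h' sg) else 0)
          = if h' = h then ∑ sg : Sgn, M.p N (extN h' sg) else 0 := by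
      intro h'
      by_cases hh : h' = h
      · subst hh
        rw [if_pos rfl]
        refine Finset.sum_congr rfl fun sg _ => ?_
        rw [if_pos (E1N h' sg)]
      · rw [if_neg hh]
        refine Finset.sum_eq_zero fun sg _ => ?_
        rw [if_neg (by rw [E1N h' sg]; exact hh)]
    rw [Finset.sum_congr rfl fun h' _ => h2 h'] at h1
    rw [Finset.sum_ite_eq' Finset.univ h
      (fun h' => ∑ sg : Sgn, M.p N (extN h' sg)), if_pos (Finset.mem_univ h)] at h1
    exact h1.symm
  -- the extended distribution
  set q : (↥(insert v T) → Sgn) → ℝ := fun f =>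
    if M.p Nv (restr rNvW f) = 0 then 0
    else q' (restr rT f) * (M.p N (restr rN f) / M.p Nv (restr rNvW f)) with hqdef
  have hq0 : ∀ f, 0 ≤ q f := by
    intro f
    rw [hqdef]
    dsimp only
    split
    · exact le_refl 0
    · exact mul_nonneg (hq'0 _) (div_nonneg (M.nonneg N hNclq _) (M.nonneg Nv hNvclq _))
  -- Claim A
  have claimA : ∀ f' : T → Sgn, ∑ sg : Sgn, q (ext f' sg) = q' f' := by
    intro f'
    have hres : ∀ sg, restr rNvW (ext f' sg) = restr rNvT f' := fun sg => E3 Nv rNvT rNvW f' sg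
    by_cases hz : M.p Nv (restr rNvT f') = 0
    · rw [F3 f' hz]
      refine Finset.sum_eq_zero fun sg _ => ?_
      rw [hqdef]
      dsimp only
      rw [hres sg, if_pos hz]
    · have hval : ∀ sg, q (ext f' sg)
          = q' f' * (M.p N (extN (restr rNvT f') sg) / M.p Nv (restr rNvT f')) := by
        intro sg
        rw [hqdef]
        dsimp only
        rw [hres sg, if_neg hz, E1 f' sg, E5 f' sg]
      rw [Finset.sum_congr rfl fun sg _ => hval sg, ← Finset.mul_sum, ← Finset.sum_div,
        claimB (restr rNvT f'), div_self hz, mul_one]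
  -- Claim C : the marginal of q on N is p N
  have claimC : ∀ gN : N → Sgn,
      M.p N gN = ∑ f : ↥(insert v T) → Sgn, if restr rN f = gN then q f else 0 := by
    intro gN
    set hg : Nv → Sgn := restr rNvN gN with hhg
    set sgg : Sgn := gN ⟨v, hvN⟩ with hsgg
    have hgN : extN hg sgg = gN := (insertEquiv v Nv hvNv).left_inv gN
    rw [sum_insert_split hvT (fun f => if restr rN f = gN then q f else 0)]
    have hcond : ∀ (f' : T → Sgn) (sg : Sgn),
        (restr rN (ext f' sg) = gN) ↔ (restr rNvT f' = hg ∧ sg = sgg) := by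
      intro f' sg
      rw [E5 f' sg, ← hgN]
      constructor
      · intro h
        have h' := (insertEquiv v Nv hvNv).symm.injective h
        exact ⟨congrArg Prod.fst h', congrArg Prod.snd h'⟩
      · rintro ⟨h1, h2⟩
        rw [h1, h2]
    have hinner : ∀ f' : T → Sgn,
        (∑ sg : Sgn, if restr rN (ext f' sg) = gN then q (ext f' sg) else 0)
          = if restr rNvT f' = hg then q (ext f' sgg) else 0 := by
      intro f'
      by_cases h1 : restr rNvT f' = hg
      · rw [if_pos h1]
        rw [Finset.sum_congr rfl fun sg _ => if_congr (hcond f' sg) rfl rfl]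
        simp only [h1, true_and]
        rw [Finset.sum_ite_eq' Finset.univ sgg (fun sg => q (ext f' sg)),
          if_pos (Finset.mem_univ sgg)]
      · rw [if_neg h1]
        refine Finset.sum_eq_zero fun sg _ => ?_
        rw [if_neg (fun hc => h1 ((hcond f' sg).mp hc).1)]
    rw [Finset.sum_congr rfl fun f' _ => hinner f']
    by_cases hz : M.p Nv hg = 0
    · rw [F4 gN (hhg ▸ hz)]
      refine (Finset.sum_eq_zero fun f' _ => ?_).symm
      by_cases h1 : restr rNvT f' = hg
      · rw [if_pos h1, hqdef]
        dsimp only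
        rw [E3 Nv rNvT rNvW f' sgg, h1, if_pos hz]
      · rw [if_neg h1]
    · have hval : ∀ f' : T → Sgn, restr rNvT f' = hg →
          q (ext f' sgg) = q' f' * (M.p N gN / M.p Nv hg) := by
        intro f' h1
        rw [hqdef]
        dsimp only
        rw [E3 Nv rNvT rNvW f' sgg, h1, if_neg hz, E1 f' sgg, E5 f' sgg, h1, hgN]
      have hterm : ∀ f' : T → Sgn,
          (if restr rNvT f' = hg then q (ext f' sgg) else 0)
            = (if restr rNvT f' = hg then q' f' else 0) * (M.p N gN / M.p Nv hg) := by
        intro f'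
        by_cases h1 : restr rNvT f' = hg
        · rw [if_pos h1, if_pos h1, hval f' h1]
        · rw [if_neg h1, if_neg h1, zero_mul]
      rw [Finset.sum_congr rfl fun f' _ => hterm f', ← Finset.sum_mul,
        ← hq' Nv rNvT hNvclq hg, mul_comm, div_mul_cancel₀ _ hz]
  -- final marginal property
  refine ⟨q, hq0, ?_⟩
  intro C hC hclqC g
  by_cases hvC : v ∈ C
  · have hCN : C ⊆ N := by
      intro u hu
      by_cases huv : u = v
      · exact huv ▸ hvN
      · have huT : u ∈ T := (Finset.mem_insert.mp (hC hu)).resolve_left huv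
        have hadj : G.Adj v u :=
          hclqC (by exact_mod_cast hvC) (by exact_mod_cast hu) (fun h => huv h.symm)
        exact Finset.mem_insert_of_mem (hNvfull u huT hadj)
    rw [nodisturb' M hCN hNclq g]
    have push : ∀ gN : N → Sgn,
        (if restr hCN gN = g then M.p N gN else 0)
          = ∑ f : ↥(insert v T) → Sgn,
              if restr hCN gN = g then (if restr rN f = gN then q f else 0) else 0 := by
      intro gN
      by_cases h1 : restr hCN gN = g
      · simp only [if_pos h1]
        exact claimC gN
      · simp only [if_neg h1]
        exact (Finset.sum_const_zero).symm
    rw [Finset.sum_congr rfl fun gN _ => push gN, Finset.sum_comm]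
    refine Finset.sum_congr rfl fun f _ => ?_
    have hother : ∀ gN ∈ (Finset.univ : Finset (N → Sgn)), gN ≠ restr rN f →
        (if restr hCN gN = g then (if restr rN f = gN then q f else 0) else 0) = 0 := by
      intro gN _ hne
      rcases em (restr hCN gN = g) with h1 | h1
      · rw [if_pos h1, if_neg (fun h : restr rN f = gN => hne h.symm)]
      · rw [if_neg h1]
    rw [Finset.sum_eq_single_of_mem (restr rN f) (Finset.mem_univ _) hother, if_pos rfl,
      show restr hCN (restr rN f) = restr hC f from rfl]
  · have hCT : C ⊆ T := fun u hu =>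
      (Finset.mem_insert.mp (hC hu)).resolve_left (fun h => hvC (h ▸ hu))
    rw [hq' C hCT hclqC g,
      sum_insert_split hvT (fun f => if restr hC f = g then q f else 0)]
    refine Finset.sum_congr rfl fun f' _ => ?_
    by_cases h1 : restr hCT f' = g
    · rw [if_pos h1]
      rw [Finset.sum_congr rfl fun sg _ => if_pos ((E3 C hCT hC f' sg).trans h1)]
      exact (claimA f').symm
    · rw [if_neg h1]
      refine (Finset.sum_eq_zero fun sg _ => ?_).symm
      rw [if_neg (fun hc => h1 ((E3 C hCT hC f' sg) ▸ hc))]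
end Vorobev

section Final
open Finset

variable [Fintype V] [DecidableEq V] {G : SimpleGraph V}

lemma sgn_one_mem : (1 : ℤ) ∈ ({-1, 1} : Finset ℤ) := by decide

lemma edgeTerm_eq_prod (a : V → Sgn) (e : Sym2 V) (hne : ¬ e.IsDiag) :
    edgeTerm a e = ∏ x : ↥(pairFinset e), (a x.1 : ℤ) := by
  induction e using Sym2.ind with
  | _ u w =>
    have huw : u ≠ w := by rwa [Sym2.mk_isDiag_iff] at hne
    have h1 : edgeTerm a s(u, w) = (a u : ℤ) * (a w : ℤ) := rfl
    have h2 : pairFinset s(u, w) = ({u, w} : Finset V) := rfl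
    have h3 : (∏ x : ↥(pairFinset s(u, w)), (a x.1 : ℤ)) = ∏ x ∈ pairFinset s(u, w), (a x : ℤ) :=
      Finset.prod_coe_sort (pairFinset s(u, w)) (fun z => ((a z : ℤ)))
    rw [h1, h3, h2, Finset.prod_pair huw]

lemma marg_one (M : NDModel G) {Wj : Finset V} (q : (Wj → Sgn) → ℝ)
    (hq : ∀ (C : Finset V) (hC : C ⊆ Wj), G.IsClique (C : Set V) →
      ∀ g : C → Sgn, M.p C g = ∑ f : Wj → Sgn, if restr hC f = g then q f else 0) :
    ∑ f : Wj → Sgn, q f = 1 := by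
  classical
  have hclq : G.IsClique ((∅ : Finset V) : Set V) := by
    rw [Finset.coe_empty]; exact SimpleGraph.isClique_empty
  set g : ((∅ : Finset V) : Finset V) → Sgn := fun _ => ⟨1, sgn_one_mem⟩ with hg
  have huniv : (Finset.univ : Finset (((∅ : Finset V) : Finset V) → Sgn)) = {g} := by
    refine Finset.eq_singleton_iff_unique_mem.mpr ⟨Finset.mem_univ g, fun f _ => ?_⟩
    funext x
    exact absurd x.2 (Finset.notMem_empty _)
  have hone : M.p ∅ g = 1 := by
    have hn := M.normalized ∅ hclq
    rwa [huniv, Finset.sum_singleton] at hn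
  have hmarg := hq ∅ (Finset.empty_subset Wj) hclq g
  rw [← hone, hmarg]
  refine (Finset.sum_congr rfl fun f _ => ?_).symm
  rw [if_pos (funext fun x => absurd x.2 (Finset.notMem_empty _))]

lemma mean_marg (M : NDModel G) {Wj : Finset V} (q : (Wj → Sgn) → ℝ)
    (hq : ∀ (C : Finset V) (hC : C ⊆ Wj), G.IsClique (C : Set V) →
      ∀ g : C → Sgn, M.p C g = ∑ f : Wj → Sgn, if restr hC f = g then q f else 0)
    {v : V} (hv : v ∈ Wj) :
    M.mean v = ∑ f : Wj → Sgn, ((f ⟨v, hv⟩ : ℤ) : ℝ) * q f := by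
  classical
  have hsub : ({v} : Finset V) ⊆ Wj := Finset.singleton_subset_iff.mpr hv
  have hclq : G.IsClique (({v} : Finset V) : Set V) := by
    rw [Finset.coe_singleton]; exact G.isClique_singleton v
  rw [NDModel.mean]
  calc ∑ g : ({v} : Finset V) → Sgn, ((g ⟨v, by simp⟩ : ℤ) : ℝ) * M.p {v} g
      = ∑ g : ({v} : Finset V) → Sgn, ∑ f : Wj → Sgn,
          if restr hsub f = g then ((g ⟨v, by simp⟩ : ℤ) : ℝ) * q f else 0 := by
        refine Finset.sum_congr rfl fun g _ => ?_
        rw [hq {v} hsub hclq g, Finset.mul_sum]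
        exact Finset.sum_congr rfl fun f _ => by rw [mul_ite, mul_zero]
    _ = ∑ f : Wj → Sgn, ∑ g : ({v} : Finset V) → Sgn,
          if restr hsub f = g then ((g ⟨v, by simp⟩ : ℤ) : ℝ) * q f else 0 :=
        Finset.sum_comm
    _ = ∑ f : Wj → Sgn, ((f ⟨v, hv⟩ : ℤ) : ℝ) * q f := by
        refine Finset.sum_congr rfl fun f _ => ?_
        rw [Finset.sum_ite_eq Finset.univ (restr hsub f)
          (fun g => ((g ⟨v, by simp⟩ : ℤ) : ℝ) * q f), if_pos (Finset.mem_univ _)]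
        rfl

lemma corrE_marg (M : NDModel G) {Wj : Finset V} (q : (Wj → Sgn) → ℝ)
    (hq : ∀ (C : Finset V) (hC : C ⊆ Wj), G.IsClique (C : Set V) →
      ∀ g : C → Sgn, M.p C g = ∑ f : Wj → Sgn, if restr hC f = g then q f else 0)
    {e : Sym2 V} (he : e ∈ G.edgeSet) (hew : ∀ u ∈ e, u ∈ Wj)
    (hsub : pairFinset e ⊆ Wj) :
    M.corrE e = ∑ f : Wj → Sgn,
      ((∏ x : ↥(pairFinset e), ((restr hsub f) x : ℤ) : ℤ) : ℝ) * q f := by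
  classical
  have hclq : G.IsClique ((pairFinset e : Finset V) : Set V) := by
    induction e using Sym2.ind with
    | _ u w =>
      have hadj : G.Adj u w := he
      have h2 : pairFinset s(u, w) = ({u, w} : Finset V) := rfl
      rw [h2]
      intro p hp r hr hpr
      simp only [Finset.coe_insert, Finset.coe_singleton, Set.mem_insert_iff,
        Set.mem_singleton_iff] at hp hr
      rcases hp with rfl | rfl <;> rcases hr with rfl | rfl
      · exact absurd rfl hpr
      · exact hadj
      · exact hadj.symm
      · exact absurd rfl hpr
  rw [NDModel.corrE]
  calc ∑ g : ↥(pairFinset e) → Sgn, ((∏ x : ↥(pairFinset e), (g x : ℤ) : ℤ) : ℝ) * M.p (pairFinset e) g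
      = ∑ g : ↥(pairFinset e) → Sgn, ∑ f : Wj → Sgn,
          if restr hsub f = g then ((∏ x : ↥(pairFinset e), (g x : ℤ) : ℤ) : ℝ) * q f else 0 := by
        refine Finset.sum_congr rfl fun g _ => ?_
        rw [hq (pairFinset e) hsub hclq g, Finset.mul_sum]
        exact Finset.sum_congr rfl fun f _ => by rw [mul_ite, mul_zero]
    _ = ∑ f : Wj → Sgn, ∑ g : ↥(pairFinset e) → Sgn,
          if restr hsub f = g then ((∏ x : ↥(pairFinset e), (g x : ℤ) : ℤ) : ℝ) * q f else 0 :=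
        Finset.sum_comm
    _ = ∑ f : Wj → Sgn, ((∏ x : ↥(pairFinset e), ((restr hsub f) x : ℤ) : ℤ) : ℝ) * q f := by
        refine Finset.sum_congr rfl fun f _ => ?_
        rw [Finset.sum_ite_eq Finset.univ (restr hsub f)
          (fun g => ((∏ x : ↥(pairFinset e), (g x : ℤ) : ℤ) : ℝ) * q f),
          if_pos (Finset.mem_univ _)]
end Final

section VorobevMain
open Finset
variable [Fintype V] [DecidableEq V] {G : SimpleGraph V}

theorem vorobev (M : NDModel G) : ∀ W : Finset V, RelChordal G ↑W →
    ∃ q : (W → Sgn) → ℝ, (∀ f, 0 ≤ q f) ∧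
      ∀ (C : Finset V) (hC : C ⊆ W), G.IsClique (C : Set V) →
        ∀ g : C → Sgn, M.p C g = ∑ f : W → Sgn, if restr hC f = g then q f else 0 := by
  intro W
  induction W using Finset.strongInduction with
  | _ W IH =>
  intro hch
  classical
  rcases W.eq_empty_or_nonempty with rfl | hne
  · refine ⟨fun _ => 1, fun _ => zero_le_one, ?_⟩
    intro C hC hclq g
    have hCe : C = ∅ := Finset.subset_empty.mp hC
    subst hCe
    have hall : ∀ f f' : ((∅ : Finset V) : Finset V) → Sgn, f = f' :=
      fun f f' => funext fun x => absurd x.2 (Finset.notMem_empty _)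
    have huniv : (Finset.univ : Finset (((∅ : Finset V) : Finset V) → Sgn)) = {g} :=
      Finset.eq_singleton_iff_unique_mem.mpr ⟨Finset.mem_univ g, fun f _ => hall f g⟩
    have hone : M.p ∅ g = 1 := by
      have hn := M.normalized ∅ hclq
      rwa [huniv, Finset.sum_singleton] at hn
    rw [hone]
    rw [show (Finset.univ : Finset (((∅ : Finset V) : Finset V) → Sgn)) = {g} from huniv]
    rw [Finset.sum_singleton, if_pos (hall _ _)]
  · obtain ⟨v, hv, hsimp⟩ := exists_simp G W hch hne
    set T := W.erase v with hTdef
    have hvT : v ∉ T := Finset.notMem_erase v W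
    have hWi : W = insert v T := (Finset.insert_erase hv).symm
    set Nv := T.filter (G.Adj v) with hNvdef
    have hNvT : Nv ⊆ T := Finset.filter_subset _ _
    have hvNv : v ∉ Nv := fun h => hvT (hNvT h)
    have hNvmem : ∀ z, z ∈ Nv → z ∈ W ∧ G.Adj v z := by
      intro z hz
      rw [hNvdef, Finset.mem_filter] at hz
      exact ⟨Finset.erase_subset v W hz.1, hz.2⟩
    have hNclq : G.IsClique ((insert v Nv : Finset V) : Set V) := by
      intro p hp q hq hpq
      rw [Finset.coe_insert] at hp hq
      rcases hp with rfl | hp <;> rcases hq with rfl | hq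
      · exact absurd rfl hpq
      · exact (hNvmem q hq).2
      · exact ((hNvmem p hp).2).symm
      · exact hsimp ⟨(hNvmem p hp).1, (hNvmem p hp).2⟩ ⟨(hNvmem q hq).1, (hNvmem q hq).2⟩ hpq
    have hNvfull : ∀ u ∈ T, G.Adj v u → u ∈ Nv :=
      fun u hu hadj => Finset.mem_filter.mpr ⟨hu, hadj⟩
    have hTsub : T ⊂ W := Finset.erase_ssubset hv
    obtain ⟨q', hq'0, hq'⟩ := IH T hTsub (hch.mono (by exact_mod_cast Finset.erase_subset v W))
    obtain ⟨q, hq0, hq⟩ := vorobev_step M v T Nv hvT hNvT hvNv hNclq hNvfull q' hq'0 hq'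
    rw [hWi]
    exact ⟨q, hq0, hq⟩
end VorobevMain

section TheEnd
open Finset
variable [Fintype V] [DecidableEq V] {G : SimpleGraph V}

lemma perj (M : NDModel G) [DecidableRel G.Adj] (Wj : Finset V) (hch : RelChordal G ↑Wj)
    (αj : V → ℝ) (βj : Sym2 V → ℝ) (ωj : ℝ)
    (hub : ∀ a : V → Sgn,
      (∑ v ∈ Wj, αj v * ((a v : ℤ) : ℝ)
        + ∑ e ∈ G.edgeFinset.filter (fun e => ∀ u ∈ e, u ∈ Wj),
            βj e * ((edgeTerm a e : ℤ) : ℝ)) ≤ ωj) :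
    ∑ v ∈ Wj, αj v * M.mean v
      + ∑ e ∈ G.edgeFinset.filter (fun e => ∀ u ∈ e, u ∈ Wj), βj e * M.corrE e ≤ ωj := by
  classical
  obtain ⟨q, hq0, hq⟩ := vorobev M Wj hch
  set ext : (Wj → Sgn) → V → Sgn :=
    fun f u => if h : u ∈ Wj then f ⟨u, h⟩ else ⟨1, sgn_one_mem⟩ with hext
  have hmean : ∀ v ∈ Wj, M.mean v = ∑ f : Wj → Sgn, ((ext f v : ℤ) : ℝ) * q f := by
    intro v hv
    rw [mean_marg M q hq hv]
    refine Finset.sum_congr rfl fun f _ => ?_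
    rw [hext]
    dsimp only
    rw [dif_pos hv]
  have hcorr : ∀ e ∈ G.edgeFinset.filter (fun e => ∀ u ∈ e, u ∈ Wj),
      M.corrE e = ∑ f : Wj → Sgn, ((edgeTerm (ext f) e : ℤ) : ℝ) * q f := by
    intro e he
    rw [Finset.mem_filter, SimpleGraph.mem_edgeFinset] at he
    have hsub : pairFinset e ⊆ Wj := by
      induction e using Sym2.ind with
      | _ u w =>
        intro z hz
        rcases Finset.mem_insert.mp hz with rfl | hz
        · exact he.2 z (Sym2.mem_mk_left _ _)
        · rw [Finset.mem_singleton] at hz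
          subst hz
          exact he.2 z (Sym2.mem_mk_right _ _)
    rw [corrE_marg M q hq he.1 he.2 hsub]
    refine Finset.sum_congr rfl fun f _ => ?_
    congr 1
    rw [edgeTerm_eq_prod (ext f) e (G.not_isDiag_of_mem_edgeSet he.1)]
    have hprod : (∏ x : ↥(pairFinset e), ((restr hsub f) x : ℤ))
        = ∏ x : ↥(pairFinset e), (ext f x.1 : ℤ) := by
      refine Finset.prod_congr rfl fun x _ => ?_
      rw [hext]
      dsimp only
      rw [dif_pos (hsub x.2)]
      rfl
    rw [hprod]
  have h1 : ∑ v ∈ Wj, αj v * M.mean v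
      = ∑ f : Wj → Sgn, (∑ v ∈ Wj, αj v * ((ext f v : ℤ) : ℝ)) * q f := by
    rw [Finset.sum_congr rfl (fun v hv => by rw [hmean v hv, Finset.mul_sum])]
    rw [Finset.sum_comm]
    refine Finset.sum_congr rfl fun f _ => ?_
    rw [Finset.sum_mul]
    exact Finset.sum_congr rfl fun v _ => (mul_assoc _ _ _).symm
  have h2 : ∑ e ∈ G.edgeFinset.filter (fun e => ∀ u ∈ e, u ∈ Wj), βj e * M.corrE e
      = ∑ f : Wj → Sgn,
          (∑ e ∈ G.edgeFinset.filter (fun e => ∀ u ∈ e, u ∈ Wj),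
            βj e * ((edgeTerm (ext f) e : ℤ) : ℝ)) * q f := by
    rw [Finset.sum_congr rfl (fun e he => by rw [hcorr e he, Finset.mul_sum])]
    rw [Finset.sum_comm]
    refine Finset.sum_congr rfl fun f _ => ?_
    rw [Finset.sum_mul]
    exact Finset.sum_congr rfl fun e _ => (mul_assoc _ _ _).symm
  rw [h1, h2, ← Finset.sum_add_distrib]
  rw [Finset.sum_congr rfl fun f _ => (add_mul _ _ (q f)).symm]
  calc ∑ f : Wj → Sgn, (∑ v ∈ Wj, αj v * ((ext f v : ℤ) : ℝ)
        + ∑ e ∈ G.edgeFinset.filter (fun e => ∀ u ∈ e, u ∈ Wj),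
            βj e * ((edgeTerm (ext f) e : ℤ) : ℝ)) * q f
      ≤ ∑ f : Wj → Sgn, ωj * q f :=
        Finset.sum_le_sum fun f _ => mul_le_mul_of_nonneg_right (hub (ext f)) (hq0 f)
    _ = ωj := by rw [← Finset.mul_sum, marg_one M q hq, mul_one]
end TheEnd

end Hidden

/-- the graph-theoretic method for monogamy relations.
Let `G` be a finite commutation graph, `α`, `β` vertex and edge coefficients, and
suppose the expression decomposes as `α = Σ_j α⁽ʲ⁾`, `β = Σ_j β⁽ʲ⁾` along induced
*chordal* subgraphs of `G` on vertex sets `W j`, with `α⁽ʲ⁾` supported on `W j` and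
`β⁽ʲ⁾` supported on the edges of `G` inside `W j`. If `ω j` is the maximum over
deterministic `±1` assignments of the `j`-th subexpression, then every
no-disturbance model on `G` satisfies
`Σ_v α(v)⟨v⟩ + Σ_{{u,v}∈E(G)} β({u,v})⟨uv⟩ ≤ Σ_j ω j`. -/
theorem chordal_decomposition_monogamy
    (G : SimpleGraph V) [DecidableRel G.Adj]
    (α : V → ℝ) (β : Sym2 V → ℝ)
    (r : ℕ) (W : Fin r → Finset V)
    (hchordal : ∀ j, (G.induce (W j : Set V)).IsChordal)
    (αj : Fin r → V → ℝ) (βj : Fin r → Sym2 V → ℝ)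
    (hαsupp : ∀ j v, αj j v ≠ 0 → v ∈ W j)
    (hβsupp : ∀ j e, βj j e ≠ 0 → e ∈ G.edgeFinset ∧ ∀ v ∈ e, v ∈ W j)
    (hα : ∀ v, α v = ∑ j, αj j v)
    (hβ : ∀ e ∈ G.edgeFinset, β e = ∑ j, βj j e)
    (ω : Fin r → ℝ)
    (hω : ∀ j, IsGreatest
      {x : ℝ | ∃ a : V → Sgn,
        x = ∑ v ∈ W j, αj j v * ((a v : ℤ) : ℝ)
          + ∑ e ∈ G.edgeFinset.filter (fun e => ∀ v ∈ e, v ∈ W j),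
              βj j e * ((edgeTerm a e : ℤ) : ℝ)} (ω j)) :
    ∀ M : NDModel G,
      ∑ v, α v * M.mean v + ∑ e ∈ G.edgeFinset, β e * M.corrE e ≤ ∑ j, ω j := by
  intro M
  classical
  have key : ∀ j, ∑ v ∈ W j, αj j v * M.mean v
      + ∑ e ∈ G.edgeFinset.filter (fun e => ∀ u ∈ e, u ∈ W j), βj j e * M.corrE e ≤ ω j := by
    intro j
    refine perj M (W j) (relChordal_of_induce (hchordal j)) (αj j) (βj j) (ω j) ?_
    intro a
    exact (hω j).2 ⟨a, rfl⟩
  have hsum1 : ∑ v, α v * M.mean v = ∑ j, ∑ v ∈ W j, αj j v * M.mean v := by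
    rw [Finset.sum_congr rfl (fun v _ => by rw [hα v, Finset.sum_mul])]
    rw [Finset.sum_comm]
    refine Finset.sum_congr rfl fun j _ => ?_
    refine (Finset.sum_subset (Finset.subset_univ (W j)) ?_).symm
    intro v _ hvW
    have hz : αj j v = 0 := by
      by_contra h
      exact hvW (hαsupp j v h)
    rw [hz, zero_mul]
  have hsum2 : ∑ e ∈ G.edgeFinset, β e * M.corrE e
      = ∑ j, ∑ e ∈ G.edgeFinset.filter (fun e => ∀ u ∈ e, u ∈ W j), βj j e * M.corrE e := by
    rw [Finset.sum_congr rfl (fun e he => by rw [hβ e he, Finset.sum_mul])]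
    rw [Finset.sum_comm]
    refine Finset.sum_congr rfl fun j _ => ?_
    refine (Finset.sum_subset (Finset.filter_subset _ _) ?_).symm
    intro e heE heF
    have hz : βj j e = 0 := by
      by_contra h
      exact heF (Finset.mem_filter.mpr ⟨heE, (hβsupp j e h).2⟩)
    rw [hz, zero_mul]
  rw [hsum1, hsum2, ← Finset.sum_add_distrib]
  exact Finset.sum_le_sum fun j _ => key j
end

section
/- For every integer n ≥ 2 and every assignment a : {1,…,n} → {−1,+1}, one has Σ_{i=1}^{n−1} a(i)a(i+1) − a(n)a(1) ≤ n − 2. -/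
/-- For every integer `n ≥ 2` and every assignment
`a : {1,…,n} → {−1,+1}`, one has `Σ_{i=1}^{n−1} a(i)a(i+1) − a(n)a(1) ≤ n − 2`.
This is the classical bound of the `n`-cycle inequality evaluated on
deterministic `±1`-valued assignments. -/
theorem cycle_classical_bound (n : ℕ) (hn : 2 ≤ n) (a : ℕ → ℤ)
    (ha : ∀ i, a i = 1 ∨ a i = -1) :
    (∑ i ∈ Finset.Icc 1 (n - 1), a i * a (i + 1)) - a n * a 1 ≤ (n : ℤ) - 2 := by
  have ht : ∀ i, a i * a (i + 1) = 1 ∨ a i * a (i + 1) = -1 := by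
    intro i
    rcases ha i with h1 | h1 <;> rcases ha (i + 1) with h2 | h2 <;>
      simp [h1, h2]
  have ht1 : ∀ i, a i * a (i + 1) ≤ 1 := by
    intro i; rcases ht i with h | h <;> omega
  have hcard : (Finset.Icc 1 (n - 1)).card = n - 1 := by
    rw [Nat.card_Icc]; omega
  rcases ha n with hn1 | hn1 <;> rcases ha 1 with h11 | h11
  · -- a n * a 1 = 1, need sum ≤ n - 1
    have : (∑ i ∈ Finset.Icc 1 (n - 1), a i * a (i + 1)) ≤ (n : ℤ) - 1 := by
      calc (∑ i ∈ Finset.Icc 1 (n - 1), a i * a (i + 1))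
          ≤ ∑ _i ∈ Finset.Icc 1 (n - 1), (1 : ℤ) :=
            Finset.sum_le_sum fun i _ => ht1 i
        _ = ((n : ℤ) - 1) := by
            rw [Finset.sum_const, hcard, nsmul_eq_mul]; omega
    rw [hn1, h11]; linarith
  · -- a n = 1, a 1 = -1: product is -1, need some term = -1
    have hne : a n ≠ a 1 := by rw [hn1, h11]; norm_num
    have hex : ∃ k ∈ Finset.Icc 1 (n - 1), a k * a (k + 1) = -1 := by
      by_contra hc
      push_neg at hc
      have hall : ∀ k ∈ Finset.Icc 1 (n - 1), a k * a (k + 1) = 1 := by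
        intro k hk
        rcases ht k with h | h
        · exact h
        · exact absurd h (hc k hk)
      have key : ∀ m, 1 ≤ m → m ≤ n → a m = a 1 := by
        intro m
        induction m with
        | zero => omega
        | succ p ih =>
          intro h1 h2
          rcases Nat.eq_or_lt_of_le h1 with he | hlt
          · have hp0 : p = 0 := by omega
            subst hp0; rfl
          · have hp1 : 1 ≤ p := by omega
            have hpn : p ≤ n - 1 := by omega
            have := hall p (Finset.mem_Icc.mpr ⟨hp1, hpn⟩)
            have hap := ih hp1 (by omega)
            rcases ha p with h | h <;> rcases ha (p + 1) with h' | h' <;>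
              rw [h, h'] at this <;> norm_num at this <;>
              rw [h', ← hap, h]
      exact hne (key n (by omega) le_rfl)
    obtain ⟨k, hk, hk1⟩ := hex
    have hsplit : (∑ i ∈ Finset.Icc 1 (n - 1), a i * a (i + 1)) =
        a k * a (k + 1) + ∑ i ∈ (Finset.Icc 1 (n - 1)).erase k, a i * a (i + 1) :=
      (Finset.add_sum_erase _ _ hk).symm
    have hrest : (∑ i ∈ (Finset.Icc 1 (n - 1)).erase k, a i * a (i + 1)) ≤ (n : ℤ) - 2 := by
      calc (∑ i ∈ (Finset.Icc 1 (n - 1)).erase k, a i * a (i + 1))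
          ≤ ∑ _i ∈ (Finset.Icc 1 (n - 1)).erase k, (1 : ℤ) :=
            Finset.sum_le_sum fun i _ => ht1 i
        _ = (((Finset.Icc 1 (n - 1)).erase k).card : ℤ) := by
            rw [Finset.sum_const]; simp
        _ ≤ (n : ℤ) - 2 := by
            rw [Finset.card_erase_of_mem hk, hcard]
            have : 2 ≤ n := hn
            omega
    rw [hn1, h11]; linarith
  · -- a n = -1, a 1 = 1: symmetric
    have hne : a n ≠ a 1 := by rw [hn1, h11]; norm_num
    have hex : ∃ k ∈ Finset.Icc 1 (n - 1), a k * a (k + 1) = -1 := by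
      by_contra hc
      push_neg at hc
      have hall : ∀ k ∈ Finset.Icc 1 (n - 1), a k * a (k + 1) = 1 := by
        intro k hk
        rcases ht k with h | h
        · exact h
        · exact absurd h (hc k hk)
      have key : ∀ m, 1 ≤ m → m ≤ n → a m = a 1 := by
        intro m
        induction m with
        | zero => omega
        | succ p ih =>
          intro h1 h2
          rcases Nat.eq_or_lt_of_le h1 with he | hlt
          · have hp0 : p = 0 := by omega
            subst hp0; rfl
          · have hp1 : 1 ≤ p := by omega
            have hpn : p ≤ n - 1 := by omega
            have := hall p (Finset.mem_Icc.mpr ⟨hp1, hpn⟩)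
            have hap := ih hp1 (by omega)
            rcases ha p with h | h <;> rcases ha (p + 1) with h' | h' <;>
              rw [h, h'] at this <;> norm_num at this <;>
              rw [h', ← hap, h]
      exact hne (key n (by omega) le_rfl)
    obtain ⟨k, hk, hk1⟩ := hex
    have hsplit : (∑ i ∈ Finset.Icc 1 (n - 1), a i * a (i + 1)) =
        a k * a (k + 1) + ∑ i ∈ (Finset.Icc 1 (n - 1)).erase k, a i * a (i + 1) :=
      (Finset.add_sum_erase _ _ hk).symm
    have hrest : (∑ i ∈ (Finset.Icc 1 (n - 1)).erase k, a i * a (i + 1)) ≤ (n : ℤ) - 2 := by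
      calc (∑ i ∈ (Finset.Icc 1 (n - 1)).erase k, a i * a (i + 1))
          ≤ ∑ _i ∈ (Finset.Icc 1 (n - 1)).erase k, (1 : ℤ) :=
            Finset.sum_le_sum fun i _ => ht1 i
        _ = (((Finset.Icc 1 (n - 1)).erase k).card : ℤ) := by
            rw [Finset.sum_const]; simp
        _ ≤ (n : ℤ) - 2 := by
            rw [Finset.card_erase_of_mem hk, hcard]
            have : 2 ≤ n := hn
            omega
    rw [hn1, h11]; linarith
  · -- both -1, product is 1
    have : (∑ i ∈ Finset.Icc 1 (n - 1), a i * a (i + 1)) ≤ (n : ℤ) - 1 := by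
      calc (∑ i ∈ Finset.Icc 1 (n - 1), a i * a (i + 1))
          ≤ ∑ _i ∈ Finset.Icc 1 (n - 1), (1 : ℤ) :=
            Finset.sum_le_sum fun i _ => ht1 i
        _ = ((n : ℤ) - 1) := by
            rw [Finset.sum_const, hcard, nsmul_eq_mul]; omega
    rw [hn1, h11]; linarith
end

section
/- There exists a bipartite no-signaling box P(a,b|x,y) with inputs x, y ∈ {1,2,3} and outcomes a, b ∈ {−1,+1} such that ⟨A_1⟩ + ⟨A_2⟩ + ⟨B_1⟩ + ⟨B_2⟩ − ⟨A_1B_1⟩ − ⟨A_1B_2⟩ − ⟨A_1B_3⟩ − ⟨A_2B_1⟩ − ⟨A_2B_2⟩ + ⟨A_2B_3⟩ − ⟨A_3B_1⟩ + ⟨A_3B_2⟩ = 8, where ⟨A_xB_y⟩ = Σ_{a,b} ab·P(a,b|x,y), ⟨A_x⟩ = Σ_{a,b} a·P(a,b|x,y) (independent of y by no-signaling), and ⟨B_y⟩ = Σ_{a,b} b·P(a,b|x,y) (independent of x). -/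
/-- A bipartite no-signaling box with inputs `x, y ∈ {1,2,3}` and `±1`-valued
outcomes: nonnegative, normalized, and with input-independent marginals. -/
structure NSBox2 where
  P : Fin 3 → Fin 3 → Sgn → Sgn → ℝ
  nonneg : ∀ x y a b, 0 ≤ P x y a b
  normalized : ∀ x y, ∑ a : Sgn, ∑ b : Sgn, P x y a b = 1
  nsA : ∀ x y y' a, ∑ b : Sgn, P x y a b = ∑ b : Sgn, P x y' a b
  nsB : ∀ x x' y b, ∑ a : Sgn, P x y a b = ∑ a : Sgn, P x' y a b

/-- The correlator `⟨A_x B_y⟩ = Σ_{a,b} ab·P(a,b|x,y)`. -/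
def NSBox2.corr (B : NSBox2) (x y : Fin 3) : ℝ :=
  ∑ a : Sgn, ∑ b : Sgn, (((a : ℤ) * (b : ℤ) : ℤ) : ℝ) * B.P x y a b

/-- The marginal `⟨A_x⟩ = Σ_{a,b} a·P(a,b|x,y)` (independent of `y` by no-signaling,
here evaluated at `y = 1`). -/
def NSBox2.meanA (B : NSBox2) (x : Fin 3) : ℝ :=
  ∑ a : Sgn, ∑ b : Sgn, ((a : ℤ) : ℝ) * B.P x 0 a b

/-- The marginal `⟨B_y⟩ = Σ_{a,b} b·P(a,b|x,y)` (independent of `x` by no-signaling,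
here evaluated at `x = 1`). -/
def NSBox2.meanB (B : NSBox2) (y : Fin 3) : ℝ :=
  ∑ a : Sgn, ∑ b : Sgn, ((b : ℤ) : ℝ) * B.P 0 y a b


lemma sgn_sum (f : Sgn → ℝ) : ∑ a : Sgn, f a = f ⟨-1, by decide⟩ + f ⟨1, by decide⟩ := by
  rw [show (Finset.univ : Finset Sgn) = {⟨-1, by decide⟩, ⟨1, by decide⟩} by decide]
  simp

noncomputable def sMat : Fin 3 → Fin 3 → ℤ :=
  fun x y => if (x = 1 ∧ y = 2) ∨ (x = 2 ∧ y = 1) then 1 else -1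

noncomputable def myBox : NSBox2 where
  P := fun x y a b => if (a : ℤ) * (b : ℤ) = sMat x y then 1/2 else 0
  nonneg := by intro x y a b; split <;> norm_num
  normalized := by
    intro x y
    fin_cases x <;> fin_cases y <;> simp only [sgn_sum] <;> norm_num [sMat, Fin.ext_iff]
  nsA := by
    intro x y y' a
    fin_cases x <;> fin_cases y <;> fin_cases y' <;>
      rcases a with ⟨a, ha⟩ <;> fin_cases ha <;> simp only [sgn_sum] <;> norm_num [sMat, Fin.ext_iff]
  nsB := by
    intro x x' y b
    fin_cases x <;> fin_cases x' <;> fin_cases y <;>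
      rcases b with ⟨b, hb⟩ <;> fin_cases hb <;> simp only [sgn_sum] <;> norm_num [sMat, Fin.ext_iff]

/-- There is a bipartite no-signaling box attaining the value `8`
(the algebraic/no-signaling maximum) of the `I_3322` Bell expression
`⟨A₁⟩ + ⟨A₂⟩ + ⟨B₁⟩ + ⟨B₂⟩ − ⟨A₁B₁⟩ − ⟨A₁B₂⟩ − ⟨A₁B₃⟩ − ⟨A₂B₁⟩ − ⟨A₂B₂⟩ + ⟨A₂B₃⟩
− ⟨A₃B₁⟩ + ⟨A₃B₂⟩`, whose classical bound is `4`. -/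
theorem I3322_ns_value_eight :
    ∃ B : NSBox2,
      B.meanA 0 + B.meanA 1 + B.meanB 0 + B.meanB 1
        - B.corr 0 0 - B.corr 0 1 - B.corr 0 2
        - B.corr 1 0 - B.corr 1 1 + B.corr 1 2
        - B.corr 2 0 + B.corr 2 1 = 8 := by
  refine ⟨myBox, ?_⟩
  simp only [NSBox2.meanA, NSBox2.meanB, NSBox2.corr, myBox, sgn_sum]
  norm_num [sMat, Fin.ext_iff]
end

section
/- For all functions a : {1,2,3} → {−1,+1}², b : {1,2} → {−1,+1}², and all c ∈ {−1,+1}², writing a(k) = (a_0^{(k)}, a_1^{(k)}), b(l) = (b_0^{(l)}, b_1^{(l)}), c = (c_0, c_1), one has: a_0^{(1)} b_0^{(1)} + a_1^{(1)} b_0^{(2)} + a_0^{(1)} a_1^{(1)} c_0 + a_0^{(2)} b_1^{(1)} + a_1^{(2)} b_1^{(2)} + a_0^{(2)} a_1^{(2)} c_1 + a_0^{(3)} b_0^{(1)} b_1^{(1)} + a_1^{(3)} b_0^{(2)} b_1^{(2)} − a_0^{(3)} a_1^{(3)} c_0 c_1 ≤ 7. -/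
private def pm (b : Bool) : ℤ := if b then 1 else -1

private lemma pm_cases (x : ℤ) (h : x = 1 ∨ x = -1) : ∃ b, x = pm b := by
  rcases h with h | h
  · exact ⟨true, h⟩
  · exact ⟨false, h⟩

set_option maxRecDepth 10000 in
private lemma cab_bool : ∀ p q r s t u w x y z m n : Bool,
    pm p * pm w + pm q * pm y + pm p * pm q * pm m
      + pm r * pm x + pm s * pm z + pm r * pm s * pm n
      + pm t * (pm w * pm x) + pm u * (pm y * pm z)
      - pm t * pm u * (pm m * pm n) ≤ 7 := by decide

/-- The classical (local hidden variable) bound of the reduced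
Cabello Bell expression `I^{A₁A₂A₃}_{B₁B₂C₁}`: Alice has three measurements,
Bob two, Charlie one, each outcome being a pair of `±1`-valued bits
(`a k = (a₀^{(k)}, a₁^{(k)})`, etc.); the bound over deterministic strategies is 7. -/
theorem cabello_reduced_classical_bound
    (a : Fin 3 → ℤ × ℤ) (b : Fin 2 → ℤ × ℤ) (c : ℤ × ℤ)
    (ha : ∀ k, ((a k).1 = 1 ∨ (a k).1 = -1) ∧ ((a k).2 = 1 ∨ (a k).2 = -1))
    (hb : ∀ l, ((b l).1 = 1 ∨ (b l).1 = -1) ∧ ((b l).2 = 1 ∨ (b l).2 = -1))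
    (hc : (c.1 = 1 ∨ c.1 = -1) ∧ (c.2 = 1 ∨ c.2 = -1)) :
    (a 0).1 * (b 0).1 + (a 0).2 * (b 1).1 + (a 0).1 * (a 0).2 * c.1
      + (a 1).1 * (b 0).2 + (a 1).2 * (b 1).2 + (a 1).1 * (a 1).2 * c.2
      + (a 2).1 * ((b 0).1 * (b 0).2) + (a 2).2 * ((b 1).1 * (b 1).2)
      - (a 2).1 * (a 2).2 * (c.1 * c.2) ≤ 7 := by
  obtain ⟨p, hp⟩ := pm_cases _ (ha 0).1
  obtain ⟨q, hq⟩ := pm_cases _ (ha 0).2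
  obtain ⟨r, hr⟩ := pm_cases _ (ha 1).1
  obtain ⟨s, hs⟩ := pm_cases _ (ha 1).2
  obtain ⟨t, ht⟩ := pm_cases _ (ha 2).1
  obtain ⟨u, hu⟩ := pm_cases _ (ha 2).2
  obtain ⟨w, hw⟩ := pm_cases _ (hb 0).1
  obtain ⟨x, hx⟩ := pm_cases _ (hb 0).2
  obtain ⟨y, hy⟩ := pm_cases _ (hb 1).1
  obtain ⟨z, hz⟩ := pm_cases _ (hb 1).2
  obtain ⟨m, hm⟩ := pm_cases _ hc.1
  obtain ⟨n, hn⟩ := pm_cases _ hc.2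
  rw [hp, hq, hr, hs, ht, hu, hw, hx, hy, hz, hm, hn]
  exact cab_bool p q r s t u w x y z m n
end

section
/- Let d ≥ 2 and n ≥ 2 be integers and let a : {1,…,n} → ℤ be any function. Writing [x] for the unique representative of x modulo d in {0,1,…,d−1}, one has Σ_{i=1}^{n−1} [a(i) − a(i+1)] + [a(n) − a(1) − 1] ≥ d − 1. -/
/-- The non-contextual (classical) bound of the `d`-outcome
generalization of the `n`-cycle inequality: for integers `d ≥ 2`, `n ≥ 2` and any
assignment `a : {1,…,n} → ℤ`, writing `[x]` for the representative `x % d` of `x`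
modulo `d` in `{0,…,d−1}`, one has
`Σ_{i=1}^{n−1} [a(i) − a(i+1)] + [a(n) − a(1) − 1] ≥ d − 1`. -/
theorem d_outcome_cycle_classical_bound (d n : ℕ) (hd : 2 ≤ d) (hn : 2 ≤ n)
    (a : ℕ → ℤ) :
    (d : ℤ) - 1 ≤
      (∑ i ∈ Finset.Icc 1 (n - 1), (a i - a (i + 1)) % (d : ℤ))
        + (a n - a 1 - 1) % (d : ℤ) := by
  have hd0 : (0 : ℤ) < d := by positivity
  set S : ℤ := (∑ i ∈ Finset.Icc 1 (n - 1), (a i - a (i + 1)) % (d : ℤ))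
      + (a n - a 1 - 1) % (d : ℤ) with hS
  -- telescoping sum
  have htel : (∑ i ∈ Finset.Icc 1 (n - 1), (a i - a (i + 1))) = a 1 - a n := by
    rw [show Finset.Icc 1 (n - 1) = Finset.Ico 1 n by
      rw [Finset.Icc_sub_one_right_eq_Ico_of_not_isMin (not_isMin_of_lt (show 0 < n by omega)) 1], Finset.sum_Ico_eq_sum_range]
    have := Finset.sum_range_sub' (fun i => a (i + 1)) (n - 1)
    simpa [show n - 1 + 1 = n by omega, add_comm, add_assoc, add_left_comm] using this
  -- S ≡ -1 mod d
  have hmod : S % (d : ℤ) = (-1 : ℤ) % (d : ℤ) := by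
    have h1 : S % (d : ℤ) =
        ((∑ i ∈ Finset.Icc 1 (n - 1), (a i - a (i + 1))) + (a n - a 1 - 1)) % (d : ℤ) := by
      rw [hS, Int.add_emod, Finset.sum_int_mod]
      conv_rhs => rw [Int.add_emod, Finset.sum_int_mod]
      simp only [fun x : ℤ => Int.emod_emod_of_dvd x (dvd_refl (d : ℤ))]
    rw [h1, htel]
    ring_nf
  have hnn : 0 ≤ S := by
    apply add_nonneg
    · exact Finset.sum_nonneg fun i _ => Int.emod_nonneg _ (by omega)
    · exact Int.emod_nonneg _ (by omega)
  have hm1 : (-1 : ℤ) % (d : ℤ) = (d : ℤ) - 1 := by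
    rw [show (-1 : ℤ) = ((d : ℤ) - 1) + (d : ℤ) * (-1) by ring, Int.add_mul_emod_self_left]
    exact Int.emod_eq_of_lt (by omega) (by omega)
  have hdecomp := Int.mul_ediv_add_emod S (d : ℤ)
  have hqnn : 0 ≤ S / (d : ℤ) := Int.ediv_nonneg hnn (le_of_lt hd0)
  nlinarith [hdecomp, hmod, hm1, hqnn]
end
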